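/- arXiv:1310.6011 — 10 statements merged into one kernel-verified Lean document; each statement's English description precedes it below -/
import Mathlib

section
/- Let K ≥ 1, let u_0, …, u_{K−1} be distinct nonzero complex numbers and α_0, …, α_{K−1} be nonzero complex numbers, and set y_n = Σ_{k=0}^{K−1} α_k u_k^n for n ≥ 0. For any integer ℓ ≥ 0, let T_{K,ℓ} be the K × (K+1) Toeplitz matrix whose (r, s) entry (0 ≤ r ≤ K−1, 0 ≤ s ≤ K, 0-based) is y_{ℓ+K+r−s}. Then rank T_{K,ℓ} = K. -/
/-- **Full rank of the Prony/Toeplitz matrix.** If `y n = ∑ k, α k * u k ^ n` is a sum of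
`K ≥ 1` exponentials with distinct nonzero nodes `u k` and nonzero weights `α k`, then for any
`ℓ ≥ 0` the `K × (K+1)` Toeplitz matrix `T` with entries `T r s = y (ℓ + K + r - s)` has
rank exactly `K`. -/
theorem stmt1 (K : ℕ) (hK : 1 ≤ K) (u α : Fin K → ℂ)
    (hu : ∀ k, u k ≠ 0) (huinj : Function.Injective u) (hα : ∀ k, α k ≠ 0)
    (y : ℕ → ℂ) (hy : ∀ n : ℕ, y n = ∑ k : Fin K, α k * u k ^ n)
    (ℓ : ℕ) (T : Matrix (Fin K) (Fin (K + 1)) ℂ)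
    (hT : ∀ (r : Fin K) (s : Fin (K + 1)), T r s = y (ℓ + K + (r : ℕ) - (s : ℕ))) :
    T.rank = K := by
  -- The square submatrix with columns 0..K-1
  set T' : Matrix (Fin K) (Fin K) ℂ := T.submatrix id Fin.castSucc with hT'
  set V : Matrix (Fin K) (Fin K) ℂ := (Matrix.vandermonde u).transpose with hV
  set D : Matrix (Fin K) (Fin K) ℂ := Matrix.diagonal (fun k => α k * u k ^ ℓ) with hD
  set W : Matrix (Fin K) (Fin K) ℂ :=
    Matrix.diagonal u * (Matrix.vandermonde u).submatrix id (Fin.revPerm) with hW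
  have hWent : ∀ (k s : Fin K), W k s = u k ^ (K - (s : ℕ)) := by
    intro k s
    have hs : (s : ℕ) < K := s.isLt
    rw [hW, Matrix.diagonal_mul]
    simp only [Matrix.submatrix_apply, Matrix.vandermonde_apply, id_eq]
    have hrev : ((Fin.revPerm s : Fin K) : ℕ) = K - 1 - (s : ℕ) := by
      have := Fin.val_rev s
      simpa [Fin.revPerm] using by omega
    rw [hrev, show K - (s : ℕ) = (K - 1 - (s : ℕ)) + 1 by omega, pow_succ]
    ring
  have hfact : T' = V * D * W := by
    ext r s
    have hs : (s : ℕ) < K := s.isLt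
    simp only [hT', Matrix.submatrix_apply, id_eq]
    rw [hT, hy, Matrix.mul_apply]
    simp only [Fin.coe_castSucc]
    refine Finset.sum_congr rfl fun k _ => ?_
    rw [hWent k s, hD, Matrix.mul_diagonal, hV]
    simp only [Matrix.transpose_apply, Matrix.vandermonde_apply]
    rw [show ℓ + K + (r : ℕ) - (s : ℕ) = (r : ℕ) + ℓ + (K - (s : ℕ)) by omega]
    rw [pow_add, pow_add]
    ring
  have hdetV : V.det ≠ 0 := by
    rw [hV, Matrix.det_transpose, Matrix.det_vandermonde]
    refine Finset.prod_ne_zero_iff.2 fun i _ => Finset.prod_ne_zero_iff.2 fun j hj => ?_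
    exact sub_ne_zero_of_ne fun h => (Finset.mem_Ioi.mp hj).ne' (huinj h)
  have hdetD : D.det ≠ 0 := by
    rw [hD, Matrix.det_diagonal]
    exact Finset.prod_ne_zero_iff.2 fun k _ => mul_ne_zero (hα k) (pow_ne_zero _ (hu k))
  have hdetW : W.det ≠ 0 := by
    rw [hW, Matrix.det_mul, Matrix.det_diagonal, Matrix.det_permute',
      Matrix.det_vandermonde]
    refine mul_ne_zero (Finset.prod_ne_zero_iff.2 fun k _ => hu k) (mul_ne_zero ?_ ?_)
    · rcases Int.units_eq_one_or (Equiv.Perm.sign (Fin.revPerm : Equiv.Perm (Fin K))) with h | h <;>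
        simp [h]
    · refine Finset.prod_ne_zero_iff.2 fun i _ => Finset.prod_ne_zero_iff.2 fun j hj => ?_
      exact sub_ne_zero_of_ne fun h => (Finset.mem_Ioi.mp hj).ne' (huinj h)
  have hdetT' : IsUnit T' := by
    rw [Matrix.isUnit_iff_isUnit_det, hfact]
    simp only [Matrix.det_mul]
    exact (mul_ne_zero (mul_ne_zero hdetV hdetD) hdetW).isUnit
  -- T' = T * E for a selection matrix E
  have hTE : T' = T * (Matrix.of fun (s : Fin (K+1)) (j : Fin K) => if s = Fin.castSucc j then (1:ℂ) else 0) := by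
    ext r s
    simp only [hT', Matrix.submatrix_apply, id_eq, Matrix.mul_apply, Matrix.of_apply,
      mul_ite, mul_one, mul_zero, Finset.sum_ite_eq', Finset.mem_univ, if_true]
  have h1 : T'.rank ≤ T.rank := by rw [hTE]; exact Matrix.rank_mul_le_left _ _
  have h2 : T'.rank = K := by
    rw [Matrix.rank_of_isUnit _ hdetT', Fintype.card_fin]
  have h3 : T.rank ≤ K := by
    simpa using T.rank_le_card_height
  omega
end

section
/- Let K ≥ 1, let u_0, …, u_{K−1} be distinct nonzero complex numbers and α_0, …, α_{K−1} be arbitrary complex numbers, and set y_n = Σ_{k=0}^{K−1} α_k u_k^n for n ≥ 0. For any integer ℓ ≥ 0, let T_{K,ℓ} be the K × (K+1) Toeplitz matrix whose (r, s) entry is y_{ℓ+K+r−s}. Then rank T_{K,ℓ} equals the number of indices k with α_k ≠ 0. In particular, if the true number of active exponentials is K̃ < K, the matrix T_{K,ℓ} is rank-deficient with rank exactly K̃. -/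
open scoped Classical

open Polynomial in
lemma vandermonde_cols_li {m : ℕ} {ι : Type*} [Fintype ι] (v : ι → ℂ)
    (hv : Function.Injective v) (hcard : Fintype.card ι ≤ m) :
    LinearIndependent ℂ (fun k : ι => fun r : Fin m => v k ^ (r : ℕ)) := by
  rw [Fintype.linearIndependent_iff]
  intro g hg k₀
  have hg' : ∀ i ∈ Finset.range m, ∑ k : ι, g k * v k ^ i = 0 := by
    intro i hi
    have := congrFun hg ⟨i, Finset.mem_range.mp hi⟩
    simpa using this
  -- Lagrange basis polynomial at k₀
  set q : ℂ[X] := Lagrange.basis Finset.univ v k₀ with hq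
  have hinj : Set.InjOn v (Finset.univ : Finset ι) := fun a _ b _ h => hv h
  have hdeg : q.degree = ((Finset.univ : Finset ι).card - 1 : ℕ) :=
    Lagrange.degree_basis hinj (Finset.mem_univ k₀)
  have hnd : q.natDegree < m := by
    have := Polynomial.natDegree_eq_of_degree_eq_some hdeg
    rw [this]
    have h1 : 1 ≤ (Finset.univ : Finset ι).card := Finset.card_pos.mpr ⟨k₀, Finset.mem_univ _⟩
    have : (Finset.univ : Finset ι).card = Fintype.card ι := rfl
    omega
  have key : ∑ k : ι, g k * q.eval (v k) = g k₀ := by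
    rw [Finset.sum_eq_single k₀]
    · rw [Lagrange.eval_basis_self hinj (Finset.mem_univ k₀), mul_one]
    · intro b _ hb
      rw [hq, Lagrange.eval_basis_of_ne (Ne.symm hb) (Finset.mem_univ b), mul_zero]
    · intro h; exact absurd (Finset.mem_univ k₀) h
  rw [← key]
  have heval : ∀ k : ι, q.eval (v k) = ∑ i ∈ Finset.range m, q.coeff i * v k ^ i := by
    intro k
    exact Polynomial.eval_eq_sum_range' hnd (v k)
  calc ∑ k : ι, g k * q.eval (v k)
      = ∑ k : ι, ∑ i ∈ Finset.range m, q.coeff i * (g k * v k ^ i) := by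
        simp_rw [heval, Finset.mul_sum]; congr 1; ext k; congr 1; ext i; ring
    _ = ∑ i ∈ Finset.range m, q.coeff i * ∑ k : ι, g k * v k ^ i := by
        rw [Finset.sum_comm]; simp_rw [Finset.mul_sum]
    _ = 0 := by
        apply Finset.sum_eq_zero; intro i hi; rw [hg' i hi, mul_zero]

/-- **Rank of the Prony/Toeplitz matrix equals the number of active exponentials.**
If `y n = ∑ k, α k * u k ^ n` with distinct nonzero nodes `u k` and arbitrary weights `α k`,
then for any `ℓ ≥ 0` the `K × (K+1)` Toeplitz matrix `T` with entries
`T r s = y (ℓ + K + r - s)` has rank equal to `#{k | α k ≠ 0}`; in particular if only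
`K̃ < K` exponentials are active the matrix is rank-deficient with rank `K̃`. -/
theorem stmt2 (K : ℕ) (hK : 1 ≤ K) (u α : Fin K → ℂ)
    (hu : ∀ k, u k ≠ 0) (huinj : Function.Injective u)
    (y : ℕ → ℂ) (hy : ∀ n : ℕ, y n = ∑ k : Fin K, α k * u k ^ n)
    (ℓ : ℕ) (T : Matrix (Fin K) (Fin (K + 1)) ℂ)
    (hT : ∀ (r : Fin K) (s : Fin (K + 1)), T r s = y (ℓ + K + (r : ℕ) - (s : ℕ))) :
    T.rank = (Finset.univ.filter (fun k => α k ≠ 0)).card := by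
  classical
  set ι := {k : Fin K // α k ≠ 0} with hι
  have hcard : Fintype.card ι = (Finset.univ.filter (fun k => α k ≠ 0)).card := by
    simp [hι, Fintype.card_subtype]
  have hleK : Fintype.card ι ≤ K := by
    have := Fintype.card_subtype_le (fun k : Fin K => α k ≠ 0)
    simpa only [Fintype.card_fin] using this
  set V : Matrix (Fin K) ι ℂ := fun r k => u k.1 ^ (r : ℕ) with hV
  set W : Matrix ι (Fin (K + 1)) ℂ :=
    fun k s => (α k.1 * u k.1 ^ (ℓ + K)) * (u k.1)⁻¹ ^ (s : ℕ) with hW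
  -- T = V * W
  have hTVW : T = V * W := by
    ext r s
    rw [hT, hy, Matrix.mul_apply]
    have hterm : ∀ k : Fin K,
        u k ^ (r : ℕ) * ((α k * u k ^ (ℓ + K)) * (u k)⁻¹ ^ (s : ℕ))
          = α k * u k ^ (ℓ + K + (r : ℕ) - (s : ℕ)) := by
      intro k
      have hs : (s : ℕ) ≤ ℓ + K + (r : ℕ) := by
        have := s.isLt; omega
      rw [pow_sub₀ (u k) (hu k) hs]
      field_simp
      rw [pow_add]
      ring
    calc (∑ k : Fin K, α k * u k ^ (ℓ + K + (r : ℕ) - (s : ℕ)))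
        = ∑ k ∈ Finset.univ.filter (fun k => α k ≠ 0),
            α k * u k ^ (ℓ + K + (r : ℕ) - (s : ℕ)) := by
          exact (Finset.sum_filter_of_ne (p := fun k => α k ≠ 0)
            (f := fun k => α k * u k ^ (ℓ + K + (r : ℕ) - (s : ℕ)))
            (fun x _ hx hαx => hx (by simp [hαx]))).symm
      _ = ∑ k : ι, α k.1 * u k.1 ^ (ℓ + K + (r : ℕ) - (s : ℕ)) := by
          rw [Finset.sum_subtype (p := fun k => α k ≠ 0)
            (Finset.univ.filter (fun k => α k ≠ 0))
            (by intro x; simp) (fun k => α k * u k ^ (ℓ + K + (r : ℕ) - (s : ℕ)))]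
      _ = ∑ k : ι, V r k * W k s := by
          apply Finset.sum_congr rfl
          intro k _
          rw [hV, hW]
          exact (hterm k.1).symm
  -- V has injective mulVecLin
  have hVinj : Function.Injective V.mulVecLin := by
    rw [← LinearMap.ker_eq_bot, LinearMap.ker_eq_bot']
    intro x hx
    have li := vandermonde_cols_li (fun k : ι => u k.1)
      (fun a b h => Subtype.ext (huinj h)) hleK
    rw [Fintype.linearIndependent_iff] at li
    have hx' : ∑ k : ι, x k • (fun r : Fin K => u k.1 ^ (r : ℕ)) = 0 := by
      funext r
      have := congrFun hx r
      rw [Matrix.mulVecLin_apply] at this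
      simpa [Matrix.mulVecLin, Matrix.mulVec, dotProduct, hV, mul_comm] using this
    funext k
    exact li x hx' k
  -- Wᵀ has injective mulVecLin
  have hWinj : Function.Injective W.transpose.mulVecLin := by
    rw [← LinearMap.ker_eq_bot, LinearMap.ker_eq_bot']
    intro x hx
    have li := vandermonde_cols_li (fun k : ι => (u k.1)⁻¹)
      (fun a b h => Subtype.ext (huinj (by
        have := congrArg (fun z : ℂ => z⁻¹) h
        simpa [inv_inv] using this))) (hleK.trans (Nat.le_succ K))
    rw [Fintype.linearIndependent_iff] at li
    have hc : ∀ k : ι, α k.1 * u k.1 ^ (ℓ + K) ≠ 0 :=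
      fun k => mul_ne_zero k.2 (pow_ne_zero _ (hu k.1))
    have hx' : ∑ k : ι, (x k * (α k.1 * u k.1 ^ (ℓ + K))) •
        (fun s : Fin (K + 1) => (u k.1)⁻¹ ^ (s : ℕ)) = 0 := by
      funext s
      have := congrFun hx s
      simp only [Matrix.mulVecLin_apply, Matrix.mulVec, dotProduct,
        Matrix.transpose_apply, hW]   at this
      simpa [Finset.sum_apply, Matrix.transpose, mul_comm, mul_assoc, mul_left_comm] using this
    funext k
    have := li _ hx' k
    exact (mul_eq_zero.mp this).resolve_right (hc k)
  -- rank computation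
  have h1 : T.rank = W.rank := by
    rw [hTVW, Matrix.rank, Matrix.rank, Matrix.mulVecLin_mul, LinearMap.range_comp]
    exact (LinearEquiv.finrank_eq
      (Submodule.equivMapOfInjective _ hVinj _)).symm
  have h2 : W.rank = Fintype.card ι := by
    rw [← Matrix.rank_transpose, Matrix.rank, LinearMap.finrank_range_of_inj hWinj]
    simp [Module.finrank_fintype_fun_eq_card]
  rw [h1, h2, hcard]
end

section
/- Let K ≥ 1, let u_0, …, u_{K−1} be distinct nonzero complex numbers and α_0, …, α_{K−1} be nonzero complex numbers, set y_n = Σ_{k=0}^{K−1} α_k u_k^n, fix ℓ ≥ 0, and let T_{K,ℓ} be the K × (K+1) Toeplitz matrix with (r, s) entry y_{ℓ+K+r−s}. Let h = (1, h_1, …, h_K)ᵀ where ∏_{k}(x − u_k) = x^K + h_1 x^{K−1} + … + h_K. Then the null space of T_{K,ℓ} is one-dimensional and is spanned by h; consequently, h is the unique vector v ∈ ℂ^{K+1} with first coordinate equal to 1 satisfying T_{K,ℓ} v = 0. -/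
open Polynomial Finset Matrix

set_option maxHeartbeats 1000000 in
/-- **The Prony vector spans the null space of the Toeplitz matrix.**
For `y n = ∑ k, α k * u k ^ n` with distinct nonzero nodes and nonzero weights, and `T` the
`K × (K+1)` Toeplitz matrix `T r s = y (ℓ + K + r - s)`, the vector
`h = (1, h_1, …, h_K)` of coefficients of `∏ k, (X - u k)` satisfies `T h = 0`, every vector in
the null space of `T` is a scalar multiple of `h`, and `h` is the unique null vector whose first
coordinate equals `1`. -/
theorem stmt3 (K : ℕ) (hK : 1 ≤ K) (u α : Fin K → ℂ)
    (hu : ∀ k, u k ≠ 0) (huinj : Function.Injective u) (hα : ∀ k, α k ≠ 0)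
    (y : ℕ → ℂ) (hy : ∀ n : ℕ, y n = ∑ k : Fin K, α k * u k ^ n)
    (ℓ : ℕ) (T : Matrix (Fin K) (Fin (K + 1)) ℂ)
    (hT : ∀ (r : Fin K) (s : Fin (K + 1)), T r s = y (ℓ + K + (r : ℕ) - (s : ℕ)))
    (h : Fin (K + 1) → ℂ)
    (hh : ∀ j : Fin (K + 1),
      h j = (∏ k : Fin K, (Polynomial.X - Polynomial.C (u k))).coeff (K - (j : ℕ))) :
    T.mulVec h = 0 ∧
      (∀ v : Fin (K + 1) → ℂ, T.mulVec v = 0 → ∃ c : ℂ, v = c • h) ∧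
      (∀ v : Fin (K + 1) → ℂ, v 0 = 1 → T.mulVec v = 0 → v = h) := by
  set P : ℂ[X] := ∏ k : Fin K, (X - C (u k)) with hP
  have hPm : P.Monic := monic_prod_of_monic _ _ fun k _ => monic_X_sub_C _
  have hPdeg : P.natDegree = K := by
    rw [hP, natDegree_prod_of_monic _ _ fun k _ => monic_X_sub_C _]
    simp [natDegree_X_sub_C]
  have hProot : ∀ k, P.eval (u k) = 0 := by
    intro k
    rw [hP, eval_prod]
    exact Finset.prod_eq_zero (Finset.mem_univ k) (by simp)
  -- the generating polynomial of a vector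
  set Q : (Fin (K + 1) → ℂ) → ℂ[X] :=
    fun v => ∑ j : Fin (K + 1), C (v j) * X ^ (K - (j : ℕ)) with hQ
  have hQcoeff : ∀ (v : Fin (K + 1) → ℂ) (j : Fin (K + 1)),
      (Q v).coeff (K - (j : ℕ)) = v j := by
    intro v j
    rw [hQ]
    simp only [finset_sum_coeff, coeff_C_mul, coeff_X_pow]
    rw [Finset.sum_eq_single j]
    · simp
    · intro i _ hij
      have h1 : (i : ℕ) ≤ K := Nat.lt_succ_iff.mp i.isLt
      have h2 : (j : ℕ) ≤ K := Nat.lt_succ_iff.mp j.isLt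
      have : (K - (j : ℕ)) ≠ (K - (i : ℕ)) := by
        intro he
        exact hij (Fin.ext (by omega))
      simp [this]
    · simp
  have hQeval : ∀ (v : Fin (K + 1) → ℂ) (x : ℂ),
      (Q v).eval x = ∑ j : Fin (K + 1), v j * x ^ (K - (j : ℕ)) := by
    intro v x; rw [hQ]; simp [eval_finset_sum]
  have hQdeg : ∀ v : Fin (K + 1) → ℂ, (Q v).natDegree ≤ K := by
    intro v
    refine natDegree_sum_le_of_forall_le _ _ fun j _ => ?_
    refine (natDegree_C_mul_le _ _).trans ?_
    simp [natDegree_X_pow]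
  -- key formula for entries of T.mulVec
  have key : ∀ (v : Fin (K + 1) → ℂ) (r : Fin K),
      T.mulVec v r = ∑ k : Fin K, α k * u k ^ (ℓ + (r : ℕ)) * (Q v).eval (u k) := by
    intro v r
    simp only [mulVec, dotProduct]
    have : ∀ s : Fin (K + 1), T r s * v s
        = ∑ k : Fin K, α k * u k ^ (ℓ + (r : ℕ)) * (u k ^ (K - (s : ℕ)) * v s) := by
      intro s
      rw [hT, hy]
      have hss : (s : ℕ) ≤ K := Nat.lt_succ_iff.mp s.isLt
      have : ℓ + K + (r : ℕ) - (s : ℕ) = (ℓ + (r : ℕ)) + (K - (s : ℕ)) := by omega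
      rw [this, Finset.sum_mul]
      refine Finset.sum_congr rfl fun k _ => ?_
      rw [pow_add]; ring
    rw [Finset.sum_congr rfl fun s _ => this s, Finset.sum_comm]
    refine Finset.sum_congr rfl fun k _ => ?_
    rw [hQeval, ← Finset.mul_sum]
    refine congrArg _ (Finset.sum_congr rfl fun j _ => by ring)
  -- h's polynomial evaluates like P
  have hQh : ∀ x : ℂ, (Q h).eval x = P.eval x := by
    intro x
    have e1 := Finset.sum_range_reflect (fun i => P.coeff i * x ^ i) (K + 1)
    simp only [Nat.add_sub_cancel] at e1
    rw [hQeval]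
    simp only [hh]
    rw [Fin.sum_univ_eq_sum_range (fun i => P.coeff (K - i) * x ^ (K - i))]
    rw [eval_eq_sum_range, hPdeg]
    exact e1
  -- Part 1
  have part1 : T.mulVec h = 0 := by
    funext r
    rw [key]
    simp only [Pi.zero_apply]
    refine Finset.sum_eq_zero fun k _ => ?_
    rw [hQh, hProot, mul_zero]
  -- Part 2
  have part2 : ∀ v : Fin (K + 1) → ℂ, T.mulVec v = 0 → v = v 0 • h := by
    intro v hv
    -- the evaluations vanish at each node
    have hw : ∀ k, (Q v).eval (u k) = 0 := by
      have h0 : (fun k => α k * u k ^ ℓ * (Q v).eval (u k)) = 0 := by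
        apply eq_zero_of_forall_pow_sum_mul_pow_eq_zero huinj
        intro r
        have h2 : ∑ k : Fin K, α k * u k ^ (ℓ + (r : ℕ)) * (Q v).eval (u k) = 0 := by
          rw [← key v r]; simpa using congrFun hv r
        rw [← h2]
        refine Finset.sum_congr rfl fun k _ => ?_
        rw [pow_add]; ring
      intro k
      have := congrFun h0 k
      simp only [Pi.zero_apply] at this
      rcases mul_eq_zero.mp this with h' | h'
      · exact absurd h' (mul_ne_zero (hα k) (pow_ne_zero _ (hu k)))
      · exact h'
    -- R = Q v - C (v 0) * P vanishes and has degree < K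
    set R : ℂ[X] := Q v - C (v 0) * P with hR
    have hRroot : ∀ k, R.eval (u k) = 0 := by
      intro k; rw [hR]; simp [hw k, hProot k]
    have hRcoeffK : R.coeff K = 0 := by
      have h1 : (Q v).coeff K = v 0 := by
        have := hQcoeff v 0
        simpa using this
      have h2 : P.coeff K = 1 := by
        have := hPm.coeff_natDegree
        rwa [hPdeg] at this
      rw [hR]; simp [h1, h2]
    have hRdeg : R.natDegree ≤ K := by
      refine le_trans (natDegree_sub_le _ _) ?_
      refine max_le (hQdeg v) ?_
      refine (natDegree_C_mul_le _ _).trans (le_of_eq hPdeg)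
    have hR0 : R = 0 := by
      by_cases hR0 : R = 0
      · exact hR0
      · have hlt : R.natDegree < K := by
          rcases lt_or_eq_of_le hRdeg with h' | h'
          · exact h'
          · exact absurd (by rw [Polynomial.leadingCoeff, h']; exact hRcoeffK)
              (Polynomial.leadingCoeff_ne_zero.mpr hR0)
        exact eq_zero_of_natDegree_lt_card_of_eval_eq_zero R huinj hRroot
          (by simpa using hlt)
    have hQvP : Q v = C (v 0) * P := by
      have := sub_eq_zero.mp (hR ▸ hR0)
      exact this
    funext j
    have := hQcoeff v j
    rw [hQvP] at this
    rw [← this, coeff_C_mul]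
    simp [hh j, hP]
  refine ⟨part1, fun v hv => ⟨v 0, part2 v hv⟩, fun v hv0 hv => ?_⟩
  have := part2 v hv
  rw [hv0, one_smul] at this
  exact this
end

section
/- Let N ≥ 1 and K ≥ 0 satisfy 2K ≤ N, and let F be the N × N unitary DFT matrix. If c, c′ ∈ ℂ^N each have at most K nonzero entries and there exists ℓ ∈ {0, …, N−1} such that (Fc)_{(ℓ+j) mod N} = (Fc′)_{(ℓ+j) mod N} for all j = 0, 1, …, 2K−1, then c = c′. In other words, a K-sparse vector c is uniquely determined by any 2K consecutive (modulo N) entries of Fc. -/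
/-- The `N × N` unitary DFT matrix, `F n m = exp (2πi n m / N) / √N`. -/
noncomputable def dft (N : ℕ) : Matrix (Fin N) (Fin N) ℂ :=
  fun n m => Complex.exp (2 * Real.pi * Complex.I * (n : ℕ) * (m : ℕ) / N) / (Real.sqrt N : ℂ)

open scoped Classical in
/-- The number of nonzero entries (the "ℓ₀ norm") of a vector. -/
noncomputable def l0 {ι : Type*} [Fintype ι] (x : ι → ℂ) : ℕ :=
  (Finset.univ.filter (fun i => x i ≠ 0)).card

/-- **A `K`-sparse vector is determined by any `2K` consecutive (mod `N`) entries of its DFT.**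
If `c, c'` each have at most `K` nonzero entries, `2K ≤ N`, and `F c` agrees with `F c'` on the
cyclic window of length `2K` starting at some `ℓ ∈ {0, …, N-1}`, then `c = c'`. -/
theorem stmt4 (N K : ℕ) (hN : 1 ≤ N) (hK : 2 * K ≤ N)
    (c c' : Fin N → ℂ) (hc : l0 c ≤ K) (hc' : l0 c' ≤ K)
    (ℓ : ℕ) (hℓ : ℓ < N)
    (hagree : ∀ j < 2 * K,
      (dft N).mulVec c ⟨(ℓ + j) % N, Nat.mod_lt _ (by omega)⟩ =
      (dft N).mulVec c' ⟨(ℓ + j) % N, Nat.mod_lt _ (by omega)⟩) :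
    c = c' := by
  classical
  set ω : ℂ := Complex.exp (2 * Real.pi * Complex.I / N) with hω
  have hprim : IsPrimitiveRoot ω N := Complex.isPrimitiveRoot_exp N (by omega)
  have hω0 : ω ≠ 0 := Complex.exp_ne_zero _
  set d : Fin N → ℂ := fun m => c m - c' m with hd
  -- the exponential entries of the DFT matrix as powers of ω
  have hexp : ∀ a b : ℕ,
      Complex.exp (2 * Real.pi * Complex.I * (a : ℂ) * (b : ℂ) / N) = ω ^ (a * b) := by
    intro a b
    rw [hω, ← Complex.exp_nat_mul]
    congr 1
    push_cast
    ring
  have hw : (Real.sqrt N : ℂ) ≠ 0 := by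
    simp only [ne_eq, Complex.ofReal_eq_zero]
    positivity
  -- reduce the mod N exponent
  have hmod : ∀ a : ℕ, ω ^ (a % N) = ω ^ a := by
    intro a
    conv_rhs => rw [← Nat.mod_add_div a N]
    rw [pow_add, pow_mul, hprim.pow_eq_one, one_pow, mul_one]
  -- the key linear equations
  have h1 : ∀ j, j < 2 * K →
      ∑ m : Fin N, d m * (ω ^ (m : ℕ)) ^ ℓ * (ω ^ (m : ℕ)) ^ j = 0 := by
    intro j hj
    have h := hagree j hj
    simp only [Matrix.mulVec, dotProduct, dft] at h
    have h2 : ∑ m : Fin N,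
        (Complex.exp (2 * Real.pi * Complex.I * (((ℓ + j) % N : ℕ) : ℂ) * (m : ℕ) / N)
          / (Real.sqrt N : ℂ)) * d m = 0 := by
      rw [← sub_eq_zero] at h
      rw [← h]
      rw [← Finset.sum_sub_distrib]
      congr 1; funext m; ring
    have h3 : ∑ m : Fin N,
        (Complex.exp (2 * Real.pi * Complex.I * (((ℓ + j) % N : ℕ) : ℂ) * (m : ℕ) / N))
          * d m = 0 := by
      have h4 : ((Real.sqrt N : ℂ))⁻¹ * ∑ m : Fin N,
          (Complex.exp (2 * Real.pi * Complex.I * (((ℓ + j) % N : ℕ) : ℂ) * (m : ℕ) / N))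
            * d m = 0 := by
        rw [Finset.mul_sum, ← h2]
        exact Finset.sum_congr rfl fun m _ => by ring
      rcases mul_eq_zero.mp h4 with h' | h'
      · exact absurd h' (inv_ne_zero hw)
      · exact h'
    calc ∑ m : Fin N, d m * (ω ^ (m : ℕ)) ^ ℓ * (ω ^ (m : ℕ)) ^ j
        = ∑ m : Fin N,
          (Complex.exp (2 * Real.pi * Complex.I * (((ℓ + j) % N : ℕ) : ℂ) * (m : ℕ) / N))
            * d m := by
          congr 1; funext m
          rw [hexp]
          have key : ω ^ ((ℓ + j) % N * (m : ℕ)) = (ω ^ (m : ℕ)) ^ ℓ * (ω ^ (m : ℕ)) ^ j :=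
            calc ω ^ ((ℓ + j) % N * (m : ℕ))
                = (ω ^ ((ℓ + j) % N)) ^ (m : ℕ) := pow_mul ..
              _ = (ω ^ (ℓ + j)) ^ (m : ℕ) := by rw [hmod]
              _ = ω ^ ((m : ℕ) * (ℓ + j)) := by rw [← pow_mul, mul_comm]
              _ = (ω ^ (m : ℕ)) ^ (ℓ + j) := pow_mul ..
              _ = _ := pow_add ..
          rw [key]; ring
      _ = 0 := h3
  -- the support of d
  set S : Finset (Fin N) := Finset.univ.filter (fun m => d m ≠ 0) with hS
  have hScard : S.card ≤ 2 * K := by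
    have hsub : S ⊆ (Finset.univ.filter (fun m => c m ≠ 0)) ∪
        (Finset.univ.filter (fun m => c' m ≠ 0)) := by
      intro m hm
      simp only [hS, Finset.mem_filter, Finset.mem_univ, true_and, hd] at hm
      simp only [Finset.mem_union, Finset.mem_filter, Finset.mem_univ, true_and]
      by_contra hcon
      push_neg at hcon
      simp [hcon.1, hcon.2] at hm
    calc S.card ≤ _ := Finset.card_le_card hsub
      _ ≤ (Finset.univ.filter (fun m => c m ≠ 0)).card +
          (Finset.univ.filter (fun m => c' m ≠ 0)).card := Finset.card_union_le _ _
      _ ≤ K + K := by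
          refine add_le_add ?_ ?_
          · exact le_trans (le_of_eq (by rw [l0])) hc
          · exact le_trans (le_of_eq (by rw [l0])) hc'
      _ = 2 * K := by ring
  -- restrict to the support
  have h2 : ∀ j, j < 2 * K →
      ∑ m ∈ S, d m * (ω ^ (m : ℕ)) ^ ℓ * (ω ^ (m : ℕ)) ^ j = 0 := by
    intro j hj
    rw [← h1 j hj]
    refine Finset.sum_subset (Finset.subset_univ S) ?_
    intro m _ hm
    simp only [hS, Finset.mem_filter, Finset.mem_univ, true_and, not_not] at hm
    simp [hm]
  -- set up the Vandermonde system
  set s : ℕ := S.card with hs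
  set e : S ≃ Fin s := S.equivFin with he
  set v : Fin s → ℂ := fun i => ω ^ (((e.symm i : S) : Fin N) : ℕ) with hv
  have hvinj : Function.Injective v := by
    intro i i' hii
    have h := hprim.pow_inj (((e.symm i : S) : Fin N)).isLt (((e.symm i' : S) : Fin N)).isLt hii
    have : (e.symm i : S) = (e.symm i' : S) := Subtype.ext (Fin.ext h)
    exact e.symm.injective this
  set b : Fin s → ℂ := fun i => d ((e.symm i : S) : Fin N) *
      (ω ^ (((e.symm i : S) : Fin N) : ℕ)) ^ ℓ with hb
  set M : Matrix (Fin s) (Fin s) ℂ := (Matrix.vandermonde v).transpose with hM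
  have hMv : M.mulVec b = 0 := by
    funext j
    have hj2K : (j : ℕ) < 2 * K := lt_of_lt_of_le j.isLt hScard
    have := h2 (j : ℕ) hj2K
    simp only [Matrix.mulVec, dotProduct, hM, Matrix.transpose_apply,
      Matrix.vandermonde, Pi.zero_apply]
    rw [← this]
    rw [← Finset.sum_attach S (fun m => d m * (ω ^ (m : ℕ)) ^ ℓ * (ω ^ (m : ℕ)) ^ (j : ℕ))]
    refine Fintype.sum_equiv e.symm _ _ fun i => ?_
    simp only [hv, hb, Matrix.of_apply]
    ring
  have hdet : M.det ≠ 0 := by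
    rw [hM, Matrix.det_transpose]
    rw [Ne, Matrix.det_vandermonde_eq_zero_iff]
    rintro ⟨i, j, hij, hne⟩
    exact hne (hvinj hij)
  have hb0 : b = 0 := by
    have hunit : IsUnit M := by
      rw [Matrix.isUnit_iff_isUnit_det]
      exact isUnit_iff_ne_zero.mpr hdet
    have hinj := Matrix.mulVec_injective_iff_isUnit.mpr hunit
    have : M.mulVec b = M.mulVec 0 := by rw [hMv, Matrix.mulVec_zero]
    exact hinj this
  -- conclude d = 0
  have hd0 : ∀ m : Fin N, d m = 0 := by
    intro m
    by_contra hm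
    have hmS : m ∈ S := by simp [hS, hm]
    have := congrFun hb0 (e ⟨m, hmS⟩)
    simp only [hb, Equiv.symm_apply_apply, Pi.zero_apply] at this
    rcases mul_eq_zero.mp this with h' | h'
    · exact hm h'
    · exact (pow_ne_zero _ (pow_ne_zero _ hω0)) h'
  funext m
  have := hd0 m
  rw [hd] at this
  exact sub_eq_zero.mp this
end

section
/- Let N ≥ 1 and let F be the N × N unitary DFT matrix. Suppose y = F x_p + x_q where x_p, x_q ∈ ℂ^N, K_p := ‖x_p‖₀ ≥ 1, K_q := ‖x_q‖₀ ≥ 1, and K_p K_q < N/2. Then there exists ℓ ∈ {0, …, N−1} such that y_{(ℓ+j) mod N} = (F x_p)_{(ℓ+j) mod N} for all j = 0, 1, …, 2K_p − 1; moreover, x_p is the unique vector in ℂ^N with at most K_p nonzero entries whose DFT agrees with y on this cyclic window, and hence the pair (x_p, x_q) is determined by y together with ℓ and K_p. -/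
open Finset Matrix

lemma key_vanish (N : ℕ) (hN : 0 < N) (d : Fin N → ℂ) (M ℓ : ℕ)
    (hM : (Finset.univ.filter (fun m => d m ≠ 0)).card ≤ M)
    (h : ∀ j < M, ∑ m : Fin N,
        Complex.exp (2 * Real.pi * Complex.I * (((ℓ + j) % N : ℕ)) * (m : ℕ) / N) * d m = 0) :
    d = 0 := by
  classical
  set ζ : ℂ := Complex.exp (2 * Real.pi * Complex.I / N) with hζdef
  have hζ : IsPrimitiveRoot ζ N := Complex.isPrimitiveRoot_exp N hN.ne'
  have hζN : ζ ^ N = 1 := hζ.pow_eq_one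
  have hexp : ∀ a b : ℕ, Complex.exp (2 * Real.pi * Complex.I * a * b / N) = (ζ ^ b) ^ a := by
    intro a b
    rw [← pow_mul, hζdef, ← Complex.exp_nat_mul]
    congr 1
    push_cast
    ring
  have hmod : ∀ (b : ℕ) (j : ℕ), (ζ ^ b) ^ ((ℓ + j) % N) = (ζ ^ b) ^ ℓ * (ζ ^ b) ^ j := by
    intro b j
    have h1 : (ζ ^ b) ^ N = 1 := by rw [← pow_mul, mul_comm, pow_mul, hζN, one_pow]
    rw [← pow_eq_pow_mod (ℓ + j) h1, pow_add]
  have h' : ∀ j < M, ∑ m : Fin N, (ζ ^ (m : ℕ)) ^ ℓ * (ζ ^ (m : ℕ)) ^ j * d m = 0 := by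
    intro j hj
    have := h j hj
    simpa only [hexp, hmod] using this
  set S : Finset (Fin N) := Finset.univ.filter (fun m => d m ≠ 0) with hSdef
  set K : ℕ := S.card with hK
  have hKM : K ≤ M := hM
  set e : Fin K ≃ S := S.equivFin.symm with he
  set v : Fin K → ℂ := fun i => ζ ^ (((e i : Fin N)) : ℕ) with hv
  have hinj : Function.Injective v := by
    intro i j hij
    have hi : ((e i : Fin N) : ℕ) < N := (e i : Fin N).isLt
    have hj : ((e j : Fin N) : ℕ) < N := (e j : Fin N).isLt
    have := hζ.pow_inj hi hj hij
    have : (e i : Fin N) = (e j : Fin N) := Fin.ext this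
    have : e i = e j := Subtype.ext this
    exact S.equivFin.symm.injective this
  have hdet : (Matrix.vandermonde v).det ≠ 0 :=
    Matrix.det_vandermonde_ne_zero_iff.mpr hinj
  set A : Matrix (Fin K) (Fin K) ℂ := (Matrix.vandermonde v)ᵀ with hA
  have hdetA : A.det ≠ 0 := by rwa [hA, Matrix.det_transpose]
  set a : Fin K → ℂ := fun i => (ζ ^ (((e i : Fin N)) : ℕ)) ^ ℓ * d (e i) with ha
  have hAa : A.mulVec a = 0 := by
    funext j
    have hjM : (j : ℕ) < M := lt_of_lt_of_le j.isLt hKM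
    have hsum : ∑ i : Fin K, v i ^ (j : ℕ) * a i
        = ∑ m : Fin N, (ζ ^ (m : ℕ)) ^ ℓ * (ζ ^ (m : ℕ)) ^ (j : ℕ) * d m := by
      have h1 : ∑ i : Fin K, v i ^ (j : ℕ) * a i
          = ∑ s : S, (ζ ^ ((s : Fin N) : ℕ)) ^ ℓ * (ζ ^ ((s : Fin N) : ℕ)) ^ (j : ℕ) * d s := by
        rw [← Equiv.sum_comp e (fun s : S =>
          (ζ ^ ((s : Fin N) : ℕ)) ^ ℓ * (ζ ^ ((s : Fin N) : ℕ)) ^ (j : ℕ) * d s)]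
        apply Finset.sum_congr rfl
        intro i _
        simp only [hv, ha]
        ring
      rw [h1,
        Finset.sum_coe_sort S (fun m => (ζ ^ (m : ℕ)) ^ ℓ * (ζ ^ (m : ℕ)) ^ (j : ℕ) * d m)]
      apply Finset.sum_subset (Finset.subset_univ S)
      intro x _ hx
      have hdx : d x = 0 := by
        by_contra hc
        exact hx (by simp [hSdef, hc])
      rw [hdx, mul_zero]
    have : A.mulVec a j = ∑ i : Fin K, v i ^ (j : ℕ) * a i := by
      simp [Matrix.mulVec, dotProduct, hA, Matrix.vandermonde, Matrix.transpose]
    rw [Pi.zero_apply, this, hsum]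
    exact h' j hjM
  have haz : a = 0 := by
    have hU : IsUnit A := (Matrix.isUnit_iff_isUnit_det A).mpr (isUnit_iff_ne_zero.mpr hdetA)
    have := Matrix.mulVec_injective_iff_isUnit.mpr hU
    apply this
    rw [hAa, Matrix.mulVec_zero]
  funext m
  show d m = 0
  by_contra hm
  have hmS : m ∈ S := by simp [hSdef, hm]
  set i : Fin K := S.equivFin ⟨m, hmS⟩ with hi
  have hei : e i = ⟨m, hmS⟩ := S.equivFin.symm_apply_apply ⟨m, hmS⟩
  have : a i = 0 := by rw [haz]; rfl
  rw [ha] at this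
  simp only [hei] at this
  rcases mul_eq_zero.mp this with h1 | h2
  · exact pow_ne_zero _ (pow_ne_zero _ (Complex.exp_ne_zero _)) h1
  · exact hm h2

open scoped Classical

lemma l0_eq {ι : Type*} [Fintype ι] (x : ι → ℂ) :
    l0 x = (Finset.univ.filter (fun i => x i ≠ 0)).card := rfl

/-- **ProSparse recovery guarantee for Fourier plus spikes.** If `y = F x_p + x_q` with
`K_p = ‖x_p‖₀ ≥ 1`, `K_q = ‖x_q‖₀ ≥ 1` and `K_p K_q < N / 2`, then there exists a starting
position `ℓ ∈ {0, …, N-1}` such that `y` agrees with `F x_p` on the cyclic window of length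
`2 K_p` starting at `ℓ`; moreover `x_p` is the unique vector with at most `K_p` nonzero entries
whose DFT agrees with `y` on that window. -/
theorem stmt8 (N : ℕ) (hN : 1 ≤ N) (xp xq : Fin N → ℂ) (Kp Kq : ℕ)
    (hKp : l0 xp = Kp) (hKq : l0 xq = Kq) (hKp1 : 1 ≤ Kp) (hKq1 : 1 ≤ Kq)
    (hbound : 2 * (Kp * Kq) < N)
    (y : Fin N → ℂ) (hy : y = (dft N).mulVec xp + xq) :
    ∃ ℓ < N,
      (∀ j < 2 * Kp,
        y ⟨(ℓ + j) % N, Nat.mod_lt _ (by omega)⟩ =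
          (dft N).mulVec xp ⟨(ℓ + j) % N, Nat.mod_lt _ (by omega)⟩) ∧
      (∀ c : Fin N → ℂ, l0 c ≤ Kp →
        (∀ j < 2 * Kp,
          (dft N).mulVec c ⟨(ℓ + j) % N, Nat.mod_lt _ (by omega)⟩ =
            y ⟨(ℓ + j) % N, Nat.mod_lt _ (by omega)⟩) →
        c = xp) := by
  have hN0 : 0 < N := hN
  -- counting: the set of bad starting positions has size < N
  have hbadj : ∀ j : ℕ,
      ((Finset.range N).filter
        (fun ℓ => xq ⟨(ℓ + j) % N, Nat.mod_lt _ hN0⟩ ≠ 0)).card ≤ Kq := by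
    intro j
    rw [← hKq, l0_eq]
    apply Finset.card_le_card_of_injOn (fun ℓ => (⟨(ℓ + j) % N, Nat.mod_lt _ hN0⟩ : Fin N))
    · intro ℓ hℓ
      simp only [Finset.coe_filter, Set.mem_setOf_eq, Finset.mem_range] at hℓ
      simp [hℓ.2]
    · intro ℓ1 h1 ℓ2 h2 heq
      simp only [Finset.coe_filter, Set.mem_setOf_eq, Finset.mem_range] at h1 h2
      have hval : (ℓ1 + j) % N = (ℓ2 + j) % N := congrArg Fin.val heq
      have hmod : ℓ1 % N = ℓ2 % N := by
        have : ℓ1 + j ≡ ℓ2 + j [MOD N] := hval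
        exact Nat.ModEq.add_right_cancel' j this
      rwa [Nat.mod_eq_of_lt h1.1, Nat.mod_eq_of_lt h2.1] at hmod
  set Bad : Finset ℕ := (Finset.range N).filter
      (fun ℓ => ∃ j, j < 2 * Kp ∧ xq ⟨(ℓ + j) % N, Nat.mod_lt _ hN0⟩ ≠ 0) with hBad
  have hBadsub : Bad ⊆ (Finset.range (2 * Kp)).biUnion
      (fun j => (Finset.range N).filter
        (fun ℓ => xq ⟨(ℓ + j) % N, Nat.mod_lt _ hN0⟩ ≠ 0)) := by
    intro ℓ hℓ
    simp only [hBad, Finset.mem_filter, Finset.mem_range] at hℓ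
    obtain ⟨hℓN, j, hj, hne⟩ := hℓ
    simp only [Finset.mem_biUnion, Finset.mem_filter, Finset.mem_range]
    exact ⟨j, hj, hℓN, hne⟩
  have hBadcard : Bad.card < N := by
    calc Bad.card ≤ _ := Finset.card_le_card hBadsub
    _ ≤ ∑ j ∈ Finset.range (2 * Kp), ((Finset.range N).filter
        (fun ℓ => xq ⟨(ℓ + j) % N, Nat.mod_lt _ hN0⟩ ≠ 0)).card := Finset.card_biUnion_le
    _ ≤ ∑ _j ∈ Finset.range (2 * Kp), Kq := Finset.sum_le_sum (fun j _ => hbadj j)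
    _ < N := by
        rw [Finset.sum_const, Finset.card_range, smul_eq_mul, mul_assoc]
        exact hbound
  have hgoodex : ∃ ℓ ∈ Finset.range N, ℓ ∉ Bad := by
    by_contra hcon
    push_neg at hcon
    have : Finset.range N ⊆ Bad := fun ℓ hℓ => hcon ℓ hℓ
    have := Finset.card_le_card this
    simp only [Finset.card_range] at this
    omega
  obtain ⟨ℓ, hℓmem, hℓgood⟩ := hgoodex
  have hℓN : ℓ < N := Finset.mem_range.mp hℓmem
  have hzero : ∀ j < 2 * Kp, xq ⟨(ℓ + j) % N, Nat.mod_lt _ hN0⟩ = 0 := by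
    intro j hj
    by_contra hne
    apply hℓgood
    simp only [hBad, Finset.mem_filter, Finset.mem_range]
    exact ⟨hℓN, j, hj, hne⟩
  refine ⟨ℓ, hℓN, ?_, ?_⟩
  · intro j hj
    rw [hy]
    simp [hzero j hj]
  · intro c hc hcw
    set d : Fin N → ℂ := c - xp with hd
    have hd0 : ∀ j < 2 * Kp,
        (dft N).mulVec d ⟨(ℓ + j) % N, Nat.mod_lt _ hN0⟩ = 0 := by
      intro j hj
      have h1 := hcw j hj
      have h2 : y ⟨(ℓ + j) % N, Nat.mod_lt _ hN0⟩ =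
          (dft N).mulVec xp ⟨(ℓ + j) % N, Nat.mod_lt _ hN0⟩ := by
        rw [hy]; simp [hzero j hj]
      rw [h2] at h1
      rw [hd, Matrix.mulVec_sub]
      simp [h1]
    have hsqrt : (Real.sqrt N : ℂ) ≠ 0 := by
      simp only [ne_eq, Complex.ofReal_eq_zero]
      exact ne_of_gt (Real.sqrt_pos.mpr (by exact_mod_cast hN0))
    have hsum : ∀ j < 2 * Kp, ∑ m : Fin N,
        Complex.exp (2 * Real.pi * Complex.I * (((ℓ + j) % N : ℕ)) * (m : ℕ) / N) * d m
          = 0 := by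
      intro j hj
      have h1 := hd0 j hj
      rw [Matrix.mulVec, dotProduct] at h1
      simp only [dft] at h1
      have h2 : ∑ m : Fin N,
          Complex.exp (2 * Real.pi * Complex.I * (((ℓ + j) % N : ℕ)) * (m : ℕ) / N) / (Real.sqrt N : ℂ) * d m = 0 := h1
      have h3 : (∑ m : Fin N,
          Complex.exp (2 * Real.pi * Complex.I * (((ℓ + j) % N : ℕ)) * (m : ℕ) / N) * d m) / (Real.sqrt N : ℂ) = 0 := by
        rw [Finset.sum_div] at *
        rw [← h2]
        apply Finset.sum_congr rfl
        intro m _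
        ring
      field_simp at h3
      simpa only [mul_zero] using h3
    have hcard : (Finset.univ.filter (fun m => d m ≠ 0)).card ≤ 2 * Kp := by
      have hsub : (Finset.univ.filter (fun m => d m ≠ 0)) ⊆
          (Finset.univ.filter (fun m => c m ≠ 0)) ∪ (Finset.univ.filter (fun m => xp m ≠ 0)) := by
        intro m hm
        simp only [Finset.mem_filter, Finset.mem_univ, true_and, Finset.mem_union] at hm ⊢
        by_contra hcon
        push_neg at hcon
        apply hm
        rw [hd]
        simp [hcon.1, hcon.2]
      calc (Finset.univ.filter (fun m => d m ≠ 0)).card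
          ≤ _ := Finset.card_le_card hsub
        _ ≤ (Finset.univ.filter (fun m => c m ≠ 0)).card
            + (Finset.univ.filter (fun m => xp m ≠ 0)).card := Finset.card_union_le _ _
        _ ≤ Kp + Kp := by
            rw [← l0_eq, ← l0_eq]
            have := hc
            rw [hKp]
            omega
        _ = 2 * Kp := by ring
    have hdz : d = 0 := key_vanish N hN0 d (2 * Kp) ℓ hcard hsum
    have : c - xp = 0 := hdz
    exact sub_eq_zero.mp this
end

section
/- Let N, S, L, K be positive integers and let A ⊆ {0, 1, …, N−1} be a set that can be covered by K intervals of length L, i.e., A ⊆ ∪_{i=1}^{K} {m_i, m_i+1, …, m_i+L−1} for some integers m_1, …, m_K. Then the number of starting positions ℓ with 0 ≤ ℓ ≤ N−S such that the interval {ℓ, ℓ+1, …, ℓ+S−1} is disjoint from A is at least N + L − (S + L − 1)(K + 1). -/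
/-- **Interval-counting lemma, non-periodic case (τ = 1).** If `A ⊆ {0, …, N-1}` can be
covered by `K` integer intervals of length `L`, then the number of starting positions
`0 ≤ ℓ ≤ N - S` whose window `{ℓ, …, ℓ + S - 1}` is disjoint from `A` is at least
`N + L - (S + L - 1)(K + 1)`. -/
theorem stmt9 (N S L K : ℕ) (hN : 1 ≤ N) (hS : 1 ≤ S) (hL : 1 ≤ L) (hK : 1 ≤ K)
    (A : Finset ℕ) (hA : A ⊆ Finset.range N)
    (m : Fin K → ℤ)
    (hcover : ∀ a ∈ A, ∃ i : Fin K, m i ≤ (a : ℤ) ∧ (a : ℤ) < m i + L) :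
    (N : ℤ) + L - ((S : ℤ) + L - 1) * (K + 1) ≤
      (((Finset.range (N - S + 1)).filter (fun ℓ => ∀ j < S, ℓ + j ∉ A)).card : ℤ) := by
  classical
  set R := Finset.range (N - S + 1) with hR
  set P : ℕ → Prop := fun ℓ => ∀ j < S, ℓ + j ∉ A with hP
  have hsplit : (R.filter P).card + (R.filter (fun ℓ => ¬ P ℓ)).card = R.card := by
    simpa using Finset.card_filter_add_card_filter_not (s := R) (p := P)
  -- The bad positions inject into a union of K intervals of length S + L - 1.
  have hsub : (R.filter (fun ℓ => ¬ P ℓ)).image (Nat.cast : ℕ → ℤ) ⊆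
      Finset.univ.biUnion (fun i : Fin K => Finset.Ioo (m i - S) (m i + L)) := by
    intro x hx
    obtain ⟨ℓ, hmem, rfl⟩ := Finset.mem_image.1 hx
    have hℓ := (Finset.mem_filter.1 hmem).2
    simp only [hP] at hℓ
    push_neg at hℓ
    obtain ⟨j, hj, hjA⟩ := hℓ
    obtain ⟨i, h1, h2⟩ := hcover _ hjA
    simp only [Finset.mem_biUnion, Finset.mem_univ, Finset.mem_Ioo, true_and]
    exact ⟨i, by push_cast at h1 h2 ⊢; omega, by push_cast at h1 h2 ⊢; omega⟩
  have hcardimg : ((R.filter (fun ℓ => ¬ P ℓ)).image (Nat.cast : ℕ → ℤ)).card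
      = (R.filter (fun ℓ => ¬ P ℓ)).card :=
    Finset.card_image_of_injective _ (fun a b h => by exact_mod_cast h)
  have hIoo : ∀ i : Fin K, (Finset.Ioo (m i - S) (m i + L)).card = S + L - 1 := by
    intro i
    rw [Int.card_Ioo]
    omega
  have hbad : (R.filter (fun ℓ => ¬ P ℓ)).card ≤ K * (S + L - 1) := by
    calc (R.filter (fun ℓ => ¬ P ℓ)).card
        = ((R.filter (fun ℓ => ¬ P ℓ)).image (Nat.cast : ℕ → ℤ)).card := hcardimg.symm
      _ ≤ (Finset.univ.biUnion (fun i : Fin K => Finset.Ioo (m i - S) (m i + L))).card :=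
          Finset.card_le_card hsub
      _ ≤ ∑ i : Fin K, (Finset.Ioo (m i - S) (m i + L)).card :=
          Finset.card_biUnion_le
      _ = K * (S + L - 1) := by
          simp [hIoo, Finset.sum_const, mul_comm]
  have hRcard : R.card = N - S + 1 := Finset.card_range _
  set t := K * (S + L - 1) with ht
  have e1 : (t : ℤ) = (K : ℤ) * ((S : ℤ) + L - 1) := by
    have h1 : ((S + L - 1 : ℕ) : ℤ) = (S : ℤ) + L - 1 := by omega
    rw [ht]; push_cast [h1]; ring
  have e2 : ((S : ℤ) + L - 1) * ((K : ℤ) + 1) = (t : ℤ) + ((S : ℤ) + L - 1) := by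
    rw [e1]; ring
  have hc1 : ((R.filter P).card : ℤ) + ((R.filter (fun ℓ => ¬ P ℓ)).card : ℤ)
      = (R.card : ℤ) := by exact_mod_cast hsplit
  have hc2 : ((R.filter (fun ℓ => ¬ P ℓ)).card : ℤ) ≤ (t : ℤ) := by exact_mod_cast hbad
  have hc3 : (R.card : ℤ) = ((N - S + 1 : ℕ) : ℤ) := by exact_mod_cast hRcard
  have hc4 : (N : ℤ) - S + 1 ≤ ((N - S + 1 : ℕ) : ℤ) := by omega
  linarith
end

section
/- Let d ≥ 1, N = 2^{2d−1}, let F be the N × N unitary DFT matrix, let v ∈ ℂ^N be the picket-fence vector with v_n = √2 if 2^d divides n and 0 otherwise, and define z = (v, −Fv) ∈ ℂ^{2N}. Then [F, I] z = F v + I(−Fv) = 0, and z has exactly 2^{d−1} + 2^{d} nonzero entries, of which 2^{d−1} are equal to √2 and 2^{d} are equal to −1 in modulus 1; i.e., the nonzero magnitudes of z consist of 2^{d−1} values equal to √2 and 2^{d} values equal to 1. -/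
open scoped Classical

open Finset

lemma gsum (K : ℕ) (hK : 0 < K) (n : ℕ) :
    ∑ k ∈ Finset.range K, Complex.exp (2 * Real.pi * Complex.I * n * k / K)
      = if K ∣ n then (K : ℂ) else 0 := by
  have hKc : (K : ℂ) ≠ 0 := Nat.cast_ne_zero.2 hK.ne'
  have hterm : ∀ k : ℕ, Complex.exp (2 * Real.pi * Complex.I * n * k / K)
      = Complex.exp (2 * Real.pi * Complex.I * n / K) ^ k := by
    intro k
    rw [← Complex.exp_nat_mul]
    ring_nf
  simp_rw [hterm]
  by_cases h : K ∣ n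
  · obtain ⟨m, rfl⟩ := h
    have h1 : Complex.exp (2 * Real.pi * Complex.I * (↑(K * m)) / K) = 1 := by
      rw [show (2 * (Real.pi:ℂ) * Complex.I * (↑(K * m)) / K) = (m : ℤ) * (2 * Real.pi * Complex.I) by
        push_cast; field_simp]
      exact Complex.exp_int_mul_two_pi_mul_I m
    push_cast at h1 ⊢
    simp [h1]
  · have hζ : Complex.exp (2 * Real.pi * Complex.I * n / K) ≠ 1 := by
      intro hc
      rw [Complex.exp_eq_one_iff] at hc
      obtain ⟨m, hm⟩ := hc
      apply h
      have h2 : (2 * (Real.pi:ℂ) * Complex.I) ≠ 0 := by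
        simp [Real.pi_ne_zero, Complex.I_ne_zero]
      have hnc : (n : ℂ) = (m : ℂ) * K := by
        field_simp at hm
        have hm' : (2 * (Real.pi:ℂ) * Complex.I) * n = (2 * (Real.pi:ℂ) * Complex.I) * ((m:ℂ) * K) := by
          linear_combination (2 * (Real.pi:ℂ) * Complex.I) * hm
        exact mul_left_cancel₀ h2 hm'
      have hni : (n : ℤ) = m * K := by exact_mod_cast hnc
      exact Int.natCast_dvd_natCast.mp ⟨m, by linarith⟩
    rw [geom_sum_eq hζ]
    have hpow : Complex.exp (2 * Real.pi * Complex.I * n / K) ^ K = 1 := by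
      rw [← Complex.exp_nat_mul,
        show (K : ℂ) * (2 * Real.pi * Complex.I * n / K) = (n : ℤ) * (2 * Real.pi * Complex.I) by
          push_cast; field_simp]
      exact Complex.exp_int_mul_two_pi_mul_I n
    rw [hpow]
    simp [h]

lemma range_filter_dvd (a K : ℕ) (ha : 0 < a) :
    (Finset.range (a * K)).filter (fun n => a ∣ n) = (Finset.range K).image (fun k => a * k) := by
  ext m
  simp only [mem_filter, mem_range, mem_image]
  constructor
  · rintro ⟨hm, k, rfl⟩
    exact ⟨k, lt_of_mul_lt_mul_left hm (Nat.zero_le a), rfl⟩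
  · rintro ⟨k, hk, rfl⟩
    exact ⟨mul_lt_mul_of_pos_left hk ha, ⟨k, rfl⟩⟩

lemma card_fin_filter_dvd (a K N : ℕ) (ha : 0 < a) (hN : N = a * K) :
    ((Finset.univ : Finset (Fin N)).filter (fun n : Fin N => a ∣ (n : ℕ))).card = K := by
  subst hN
  have h1 : ((Finset.univ : Finset (Fin (a * K))).filter (fun n : Fin (a * K) => a ∣ (n : ℕ))).card
      = ((Finset.range (a * K)).filter (fun n => a ∣ n)).card := by
    rw [Finset.card_filter, Finset.card_filter]
    exact Fin.sum_univ_eq_sum_range (fun n => if a ∣ n then 1 else 0) (a * K)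
  rw [h1, range_filter_dvd a K ha, Finset.card_image_of_injective _ (mul_right_injective₀ ha.ne'),
    Finset.card_range]

lemma dft_picket (d N : ℕ) (hd : 1 ≤ d) (hN : N = 2 ^ (2 * d - 1)) (v : Fin N → ℂ)
    (hv : ∀ n : Fin N, v n = if 2 ^ d ∣ (n : ℕ) then (Real.sqrt 2 : ℂ) else 0) (n : Fin N) :
    (dft N).mulVec v n = if 2 ^ (d - 1) ∣ (n : ℕ) then 1 else 0 := by
  set a := 2 ^ d with ha
  set K := 2 ^ (d - 1) with hK
  have hNaK : N = a * K := by
    rw [hN, ha, hK, ← pow_add]; congr 1; omega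
  have hapos : 0 < a := Nat.pow_pos (by norm_num)
  have hKpos : 0 < K := Nat.pow_pos (by norm_num)
  have hNpos : 0 < N := by rw [hNaK]; positivity
  have hNc : (N : ℂ) ≠ 0 := Nat.cast_ne_zero.2 hNpos.ne'
  have hKc : (K : ℂ) ≠ 0 := Nat.cast_ne_zero.2 hKpos.ne'
  have hsqrt : Real.sqrt N = (K : ℝ) * Real.sqrt 2 := by
    have hNr : (N : ℝ) = (K : ℝ) ^ 2 * 2 := by
      rw [hNaK]; push_cast [ha, hK]
      rw [← pow_mul, ← pow_add]
      rw [← pow_succ]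
      congr 1
      omega
    rw [hNr, Real.sqrt_mul (by positivity), Real.sqrt_sq (by positivity)]
  have step1 : (dft N).mulVec v n
      = ∑ m ∈ Finset.range N, (if a ∣ m then
          Complex.exp (2 * Real.pi * Complex.I * (n : ℕ) * m / N) / (Real.sqrt N : ℂ) * (Real.sqrt 2 : ℂ) else 0) := by
    rw [Matrix.mulVec, dotProduct, ← Fin.sum_univ_eq_sum_range
      (fun m => if a ∣ m then Complex.exp (2 * Real.pi * Complex.I * (n : ℕ) * m / N) / (Real.sqrt N : ℂ) * (Real.sqrt 2 : ℂ) else 0) N]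
    refine Finset.sum_congr rfl fun m _ => ?_
    rw [hv m, dft]
    split <;> simp
  rw [step1, ← Finset.sum_filter, show Finset.range N = Finset.range (a*K) from by rw [hNaK], range_filter_dvd a K hapos,
    Finset.sum_image (fun x _ y _ h => mul_right_injective₀ hapos.ne' h)]
  have step2 : ∀ k ∈ Finset.range K,
      Complex.exp (2 * Real.pi * Complex.I * (n : ℕ) * (↑(a * k)) / N) / (Real.sqrt N : ℂ) * (Real.sqrt 2 : ℂ)
      = Complex.exp (2 * Real.pi * Complex.I * (n : ℕ) * k / K) / (Real.sqrt N : ℂ) * (Real.sqrt 2 : ℂ) := by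
    intro k _
    congr 2
    have : (N : ℂ) = (a : ℂ) * K := by rw [hNaK]; push_cast; ring
    rw [this]
    push_cast
    have hac : (a : ℂ) ≠ 0 := Nat.cast_ne_zero.2 hapos.ne'
    congr 1
    rw [div_eq_div_iff (mul_ne_zero hac hKc) hKc]
    ring
  rw [Finset.sum_congr rfl step2, ← Finset.sum_mul, ← Finset.sum_div, gsum K hKpos n]
  have hs2 : (Real.sqrt 2 : ℂ) ≠ 0 := by
    simp [Complex.ofReal_ne_zero, Real.sqrt_ne_zero', show (0:ℝ) < 2 by norm_num]
  split
  · rw [hsqrt]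
    push_cast
    field_simp
  · simp

lemma card_filter_sum {α β : Type*} [Fintype α] [Fintype β] (p : α ⊕ β → Prop) [DecidablePred p] :
    ((Finset.univ : Finset (α ⊕ β)).filter p).card
      = ((Finset.univ : Finset α).filter fun a => p (Sum.inl a)).card
        + ((Finset.univ : Finset β).filter fun b => p (Sum.inr b)).card := by
  rw [← Finset.card_toLeft_add_card_toRight]
  congr 1 <;> · congr 1; ext x; simp

/-- **The null vector `z = (v, -Fv)` of `[F, I]`.** With `d ≥ 1`, `N = 2^(2d-1)`, `v` the
picket-fence vector with entries `√2` at the multiples of `2^d`, and `z = (v, -Fv) ∈ ℂ^(2N)`,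
one has `[F, I] z = F v + (-F v) = 0`, and `z` has exactly `2^(d-1) + 2^d` nonzero entries,
whose magnitudes consist of `2^(d-1)` values equal to `√2` and `2^d` values equal to `1`. -/
theorem stmt12 (d : ℕ) (hd : 1 ≤ d) (N : ℕ) (hN : N = 2 ^ (2 * d - 1))
    (v : Fin N → ℂ)
    (hv : ∀ n : Fin N, v n = if 2 ^ d ∣ (n : ℕ) then (Real.sqrt 2 : ℂ) else 0)
    (z : Fin N ⊕ Fin N → ℂ) (hz : z = Sum.elim v (-(dft N).mulVec v)) :
    (dft N).mulVec (fun n => z (Sum.inl n)) + (fun n => z (Sum.inr n)) = 0 ∧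
    (Finset.univ.filter (fun i => z i ≠ 0)).card = 2 ^ (d - 1) + 2 ^ d ∧
    (Finset.univ.filter (fun i => ‖z i‖ = Real.sqrt 2)).card = 2 ^ (d - 1) ∧
    (Finset.univ.filter (fun i => ‖z i‖ = 1)).card = 2 ^ d := by
  subst hz
  have hw := dft_picket d N hd hN v hv
  have hsq2 : Real.sqrt 2 ^ 2 = 2 := Real.sq_sqrt (by norm_num)
  have hs2pos : 0 < Real.sqrt 2 := Real.sqrt_pos.2 (by norm_num)
  have hs2ne0 : (Real.sqrt 2 : ℂ) ≠ 0 := by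
    exact_mod_cast Complex.ofReal_ne_zero.2 hs2pos.ne'
  have hs2ne1 : Real.sqrt 2 ≠ 1 := by
    intro h; rw [h] at hsq2; norm_num at hsq2
  have habsv : ∀ n : Fin N, ‖v n‖
      = if 2 ^ d ∣ (n : ℕ) then Real.sqrt 2 else 0 := by
    intro n
    rw [hv n]
    split
    · rw [Complex.norm_of_nonneg (Real.sqrt_nonneg 2)]
    · simp
  have habsw : ∀ n : Fin N, ‖(-(dft N).mulVec v) n‖
      = if 2 ^ (d - 1) ∣ (n : ℕ) then 1 else 0 := by
    intro n
    rw [Pi.neg_apply, norm_neg, hw n]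
    split <;> simp
  have hN1 : N = 2 ^ d * 2 ^ (d - 1) := by rw [hN, ← pow_add]; congr 1; omega
  have hN2 : N = 2 ^ (d - 1) * 2 ^ d := by rw [hN, ← pow_add]; congr 1; omega
  have hpos1 : 0 < 2 ^ d := Nat.pow_pos (by norm_num)
  have hpos2 : 0 < 2 ^ (d - 1) := Nat.pow_pos (by norm_num)
  refine ⟨?_, ?_, ?_, ?_⟩
  · funext n
    simp only [Sum.elim_inl, Sum.elim_inr, Pi.add_apply, Pi.neg_apply, Pi.zero_apply]
    exact add_neg_cancel _
  · rw [card_filter_sum]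
    have e1 : ((Finset.univ : Finset (Fin N)).filter fun n =>
        Sum.elim v (-(dft N).mulVec v) (Sum.inl n) ≠ 0)
        = (Finset.univ.filter fun n : Fin N => 2 ^ d ∣ (n : ℕ)) := by
      apply Finset.filter_congr
      intro n _
      simp only [Sum.elim_inl, hv n]
      split <;> simp_all
    have e2 : ((Finset.univ : Finset (Fin N)).filter fun n =>
        Sum.elim v (-(dft N).mulVec v) (Sum.inr n) ≠ 0)
        = (Finset.univ.filter fun n : Fin N => 2 ^ (d - 1) ∣ (n : ℕ)) := by
      apply Finset.filter_congr
      intro n _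
      simp only [Sum.elim_inr, Pi.neg_apply, hw n, neg_ne_zero]
      split <;> simp_all
    rw [e1, e2, card_fin_filter_dvd _ _ _ hpos1 hN1, card_fin_filter_dvd _ _ _ hpos2 hN2]
  · rw [card_filter_sum]
    have e1 : ((Finset.univ : Finset (Fin N)).filter fun n =>
        ‖Sum.elim v (-(dft N).mulVec v) (Sum.inl n)‖ = Real.sqrt 2)
        = (Finset.univ.filter fun n : Fin N => 2 ^ d ∣ (n : ℕ)) := by
      apply Finset.filter_congr
      intro n _
      simp only [Sum.elim_inl, habsv n]
      split <;> simp_all [hs2pos.ne', hs2pos.ne]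
    have e2 : ((Finset.univ : Finset (Fin N)).filter fun n =>
        ‖Sum.elim v (-(dft N).mulVec v) (Sum.inr n)‖ = Real.sqrt 2) = ∅ := by
      rw [Finset.filter_eq_empty_iff]
      intro n _
      simp only [Sum.elim_inr, habsw n]
      split <;> simp_all [Ne.symm hs2ne1, hs2pos.ne]
    rw [e1, e2, card_fin_filter_dvd _ _ _ hpos1 hN1, Finset.card_empty, add_zero]
  · rw [card_filter_sum]
    have e1 : ((Finset.univ : Finset (Fin N)).filter fun n =>
        ‖Sum.elim v (-(dft N).mulVec v) (Sum.inl n)‖ = 1) = ∅ := by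
      rw [Finset.filter_eq_empty_iff]
      intro n _
      simp only [Sum.elim_inl, habsv n]
      split <;> simp_all [hs2ne1]
    have e2 : ((Finset.univ : Finset (Fin N)).filter fun n =>
        ‖Sum.elim v (-(dft N).mulVec v) (Sum.inr n)‖ = 1)
        = (Finset.univ.filter fun n : Fin N => 2 ^ (d - 1) ∣ (n : ℕ)) := by
      apply Finset.filter_congr
      intro n _
      simp only [Sum.elim_inr, habsw n]
      split <;> simp_all
    rw [e1, e2, Finset.card_empty, zero_add, card_fin_filter_dvd _ _ _ hpos2 hN2]
end

section
/- Let D be any complex M × n matrix and let z ∈ ℂ^n satisfy Dz = 0. Let Λ ⊆ {0, …, n−1} be a set of K indices such that ‖z‖₁ < 2 Σ_{i∈Λ} |z_i|. Define x ∈ ℂ^n by x_i = −2 z_i for i ∈ Λ and x_i = 0 otherwise, and define x̃ = z + x. Then D x̃ = D x, x has at most K nonzero entries, and ‖x̃‖₁ = ‖z‖₁ < ‖x‖₁. Consequently, x is not a minimizer of ‖w‖₁ subject to Dw = Dx. -/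
/-- **The general mechanism for constructing `ℓ₁` counterexamples.** Let `D z = 0` and let
`Λ` be a set of `K` indices such that `‖z‖₁ < 2 ∑_{i ∈ Λ} |z i|`. Define `x` by
`x i = -2 z i` on `Λ` and `0` elsewhere, and `x̃ = z + x`. Then `D x̃ = D x`, `x` has at most
`K` nonzero entries, `‖x̃‖₁ = ‖z‖₁ < ‖x‖₁`, and consequently `x` does not minimize `‖w‖₁`
subject to `D w = D x`. -/
theorem stmt14 (M n K : ℕ) (D : Matrix (Fin M) (Fin n) ℂ)
    (z : Fin n → ℂ) (hz : D.mulVec z = 0)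
    (Λ : Finset (Fin n)) (hΛ : Λ.card = K)
    (hz1 : ∑ i : Fin n, ‖z i‖ < 2 * ∑ i ∈ Λ, ‖z i‖)
    (x : Fin n → ℂ) (hx : ∀ i, x i = if i ∈ Λ then -2 * z i else 0)
    (xt : Fin n → ℂ) (hxt : xt = z + x) :
    D.mulVec xt = D.mulVec x ∧
    l0 x ≤ K ∧
    (∑ i : Fin n, ‖xt i‖ = ∑ i : Fin n, ‖z i‖) ∧
    (∑ i : Fin n, ‖z i‖ < ∑ i : Fin n, ‖x i‖) ∧
    ∃ w : Fin n → ℂ, D.mulVec w = D.mulVec x ∧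
      ∑ i : Fin n, ‖w i‖ < ∑ i : Fin n, ‖x i‖ := by

  have hmul : D.mulVec xt = D.mulVec x := by
    rw [hxt, Matrix.mulVec_add, hz, zero_add]
  have habs : ∀ i, ‖xt i‖ = ‖z i‖ := by
    intro i
    rw [hxt]
    simp only [Pi.add_apply, hx i]
    by_cases h : i ∈ Λ <;> simp [h]
    · have : z i + -(2 * z i) = -(z i) := by ring
      rw [this, norm_neg]
  have hsumx : ∑ i : Fin n, ‖x i‖ = 2 * ∑ i ∈ Λ, ‖z i‖ := by
    rw [Finset.mul_sum]
    rw [← Finset.sum_subset (Finset.subset_univ Λ)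
      (fun i _ hi => by rw [hx i, if_neg hi, norm_zero])]
    apply Finset.sum_congr rfl
    intro i hi
    rw [hx i, if_pos hi]
    rw [norm_mul]
    simp
  have hlt : ∑ i : Fin n, ‖z i‖ < ∑ i : Fin n, ‖x i‖ := by
    rw [hsumx]; exact hz1
  refine ⟨hmul, ?_, by simp [habs], hlt, xt, hmul, by simpa [habs] using hlt⟩
  rw [← hΛ]
  classical
  unfold l0
  apply Finset.card_le_card
  intro i hi
  simp only [Finset.mem_filter] at hi
  by_contra h
  exact hi.2 (by rw [hx i, if_neg h])
end

section
/- For every d ≥ 4, with N = 2^{2d−1}, D = [F, I] the N × 2N union of the unitary DFT matrix F and the identity, and K = ⌊√N⌋, there exist vectors x, x̃ ∈ ℂ^{2N} with x ≠ x̃ such that: x has at most K nonzero entries (and K < √N since √N is irrational), D x = D x̃, and ‖x̃‖₁ < ‖x‖₁. In particular, although x is the unique sparsest representation of y = Dx (as K < √N = 1/μ(D)), x is not a minimizer of the ℓ₁ problem (P1) for y; hence (P0) and (P1) are not equivalent for the union of Fourier and canonical bases at sparsity level ⌊√N⌋. -/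
/-- The synthesis map of the dictionary `[F, I]` : it sends `w = (a, b) ∈ ℂ^(2N)` to
`F a + b ∈ ℂ^N`. -/
noncomputable def synth (N : ℕ) (w : Fin N ⊕ Fin N → ℂ) : Fin N → ℂ :=
  (dft N).mulVec (w ∘ Sum.inl) + (w ∘ Sum.inr)

section Aux

open Complex Finset


lemma exp_geom_sum (M : ℕ) (hM : 0 < M) (t : ℤ) :
    ∑ j ∈ Finset.range M, Complex.exp (2 * Real.pi * Complex.I * t * j / M) =
      if (M : ℤ) ∣ t then (M : ℂ) else 0 := by
  have hMC : (M : ℂ) ≠ 0 := Nat.cast_ne_zero.mpr hM.ne'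
  have hpi : (Real.pi : ℂ) ≠ 0 := by exact_mod_cast Real.pi_ne_zero
  have h2pI : (2 * Real.pi * Complex.I : ℂ) ≠ 0 := by
    simp [hpi, Complex.I_ne_zero]
  have key : ∀ j : ℕ, Complex.exp (2 * Real.pi * Complex.I * t * j / M) =
      Complex.exp (2 * Real.pi * Complex.I * t / M) ^ j := by
    intro j
    rw [← Complex.exp_nat_mul]
    ring_nf
  simp only [key]
  by_cases h : (M : ℤ) ∣ t
  · obtain ⟨s, rfl⟩ := h
    have h1 : Complex.exp (2 * Real.pi * Complex.I * ((M : ℤ) * s : ℤ) / M) = 1 := by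
      have he : ((2 : ℂ) * Real.pi * Complex.I * ((M : ℤ) * s : ℤ) / M) = (s : ℤ) * (2 * Real.pi * Complex.I) := by
        push_cast
        field_simp
      rw [he, Complex.exp_int_mul_two_pi_mul_I]
    rw [h1]
    simp
  · have hx1 : Complex.exp (2 * Real.pi * Complex.I * t / M) ≠ 1 := by
      intro hc
      rw [Complex.exp_eq_one_iff] at hc
      obtain ⟨n, hn⟩ := hc
      apply h
      have hn' : (2 * Real.pi * Complex.I) * (t : ℂ) = (2 * Real.pi * Complex.I) * ((n : ℂ) * M) := by
        field_simp at hn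
        linear_combination (2 * Real.pi * Complex.I) * hn
      have h3 : (t : ℂ) = (n : ℂ) * M := mul_left_cancel₀ h2pI hn'
      have h4 : t = n * M := by exact_mod_cast h3
      exact ⟨n, by linarith⟩
    rw [geom_sum_eq hx1]
    have hxM : Complex.exp (2 * Real.pi * Complex.I * t / M) ^ M = 1 := by
      rw [← Complex.exp_nat_mul]
      have he : (M : ℂ) * (2 * Real.pi * Complex.I * t / M) = (t : ℤ) * (2 * Real.pi * Complex.I) := by
        field_simp
      rw [he, Complex.exp_int_mul_two_pi_mul_I]
    rw [hxM]
    simp [h]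

lemma sum_fin_dvd {β : Type*} [AddCommMonoid β] (N L M : ℕ) (hN : N = L * M) (hL : 0 < L)
    (hM : 0 < M) (f : ℕ → β) :
    ∑ n : Fin N, (if L ∣ (n : ℕ) then f (n : ℕ) else 0) = ∑ j ∈ Finset.range M, f (L * j) := by
  have hN0 : 0 < N := hN ▸ Nat.mul_pos hL hM
  rw [← Finset.sum_filter]
  refine Finset.sum_nbij' (fun n => (n : ℕ) / L) (fun j => ⟨L * j % N, Nat.mod_lt _ hN0⟩)
    ?_ ?_ ?_ ?_ ?_
  · intro a ha
    simp only [Finset.mem_filter, Finset.mem_univ, true_and] at ha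
    obtain ⟨q, hq⟩ := ha
    simp only [Finset.mem_range]
    have : (a : ℕ) < L * M := by rw [← hN]; exact a.2
    rw [hq] at this ⊢
    rw [Nat.mul_div_cancel_left _ hL]
    exact lt_of_mul_lt_mul_left this (Nat.zero_le L)
  · intro j hj
    simp only [Finset.mem_filter, Finset.mem_univ, true_and]
    exact (Nat.dvd_mod_iff (hN ▸ Dvd.intro M rfl)).mpr (Dvd.intro j rfl)
  · intro a ha
    simp only [Finset.mem_filter, Finset.mem_univ, true_and] at ha
    obtain ⟨q, hq⟩ := ha
    apply Fin.ext
    simp only [hq, Nat.mul_div_cancel_left _ hL]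
    exact Nat.mod_eq_of_lt (hq ▸ a.2)
  · intro j hj
    simp only [Finset.mem_range] at hj
    have hlt : L * j < N := by
      rw [hN]
      exact (Nat.mul_lt_mul_left hL).mpr hj
    simp [Nat.mod_eq_of_lt hlt, Nat.mul_div_cancel_left _ hL]
  · intro a ha
    simp only [Finset.mem_filter, Finset.mem_univ, true_and] at ha
    obtain ⟨q, hq⟩ := ha
    simp only [hq, Nat.mul_div_cancel_left _ hL]

lemma dft_orth (N : ℕ) (hN : 0 < N) (m m' : Fin N) :
    ∑ n : Fin N, (starRingEnd ℂ) (dft N n m) * dft N n m' = if m = m' then 1 else 0 := by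
  have hNC : (N : ℂ) ≠ 0 := Nat.cast_ne_zero.mpr hN.ne'
  have hsq : ((Real.sqrt N : ℂ)) * (Real.sqrt N : ℂ) = (N : ℂ) := by
    rw [← Complex.ofReal_mul, Real.mul_self_sqrt (Nat.cast_nonneg N)]
    norm_cast
  have hterm : ∀ n : Fin N, (starRingEnd ℂ) (dft N n m) * dft N n m' =
      Complex.exp (2 * Real.pi * Complex.I * ((m' : ℤ) - (m : ℤ)) * (n : ℕ) / N) / N := by
    intro n
    simp only [dft, map_div₀, ← Complex.exp_conj]
    rw [div_mul_div_comm, ← Complex.exp_add, Complex.conj_ofReal, hsq]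
    congr 1
    simp only [map_div₀, map_mul, Complex.conj_I, Complex.conj_ofReal, map_ofNat, map_natCast]
    push_cast
    ring
  rw [Finset.sum_congr rfl (fun n _ => hterm n)]
  rw [← Finset.sum_div]
  rw [Fin.sum_univ_eq_sum_range (fun n => Complex.exp (2 * Real.pi * Complex.I * ((m' : ℤ) - (m : ℤ)) * (n : ℕ) / N))]
  have hgs := exp_geom_sum N hN ((m' : ℤ) - (m : ℤ))
  push_cast at hgs ⊢
  rw [hgs]
  have hiff : ((N : ℤ) ∣ ((m' : ℤ) - (m : ℤ))) ↔ m = m' := by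
    constructor
    · intro hdvd
      have h0 : ((m' : ℤ) - (m : ℤ)) = 0 := by
        apply Int.eq_zero_of_abs_lt_dvd hdvd
        have hm := m.2
        have hm' := m'.2
        rw [abs_lt]
        omega
      have : (m : ℕ) = (m' : ℕ) := by omega
      exact Fin.ext this
    · rintro rfl; simp
  rw [if_congr hiff rfl rfl]
  split_ifs with h
  · field_simp
  · simp

lemma abs_dft (N : ℕ) (n m : Fin N) :
    ‖dft N n m‖ = 1 / Real.sqrt N := by
  unfold dft
  rw [norm_div]
  congr 1
  · rw [Complex.norm_exp]
    convert Real.exp_zero using 2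
    have : (2 * Real.pi * Complex.I * (n : ℕ) * (m : ℕ) / N) =
        ((2 * Real.pi * (n : ℕ) * (m : ℕ) / N : ℝ) : ℂ) * Complex.I := by
      push_cast; ring
    rw [this]
    simp
  · rw [Complex.norm_real, Real.norm_of_nonneg (Real.sqrt_nonneg _)]

open scoped Classical in
lemma sum_abs_le_l0_mul {N : ℕ} (v : Fin N → ℂ) (B : ℝ) (hB : ∀ m, ‖v m‖ ≤ B) :
    ∑ m, ‖v m‖ ≤ (l0 v : ℝ) * B := by
  classical
  have h1 : ∑ m, ‖v m‖ = ∑ m ∈ Finset.univ.filter (fun i => v i ≠ 0),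
      ‖v m‖ := by
    symm
    apply Finset.sum_subset (Finset.filter_subset _ _)
    intro x _ hx
    simp only [Finset.mem_filter, Finset.mem_univ, true_and, not_not] at hx
    simp [hx]
  rw [h1]
  calc ∑ m ∈ Finset.univ.filter (fun i => v i ≠ 0), ‖v m‖
      ≤ (Finset.univ.filter (fun i => v i ≠ 0)).card • B :=
        Finset.sum_le_card_nsmul _ _ _ (fun x _ => hB x)
    _ = (l0 v : ℝ) * B := by rw [nsmul_eq_mul]; norm_num [l0]

lemma dft_inversion (N : ℕ) (hN : 0 < N) (c : Fin N → ℂ) (m : Fin N) :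
    c m = ∑ n : Fin N, (starRingEnd ℂ) (dft N n m) * (dft N).mulVec c n := by
  have h1 : ∀ n : Fin N, (starRingEnd ℂ) (dft N n m) * (dft N).mulVec c n =
      ∑ m' : Fin N, (starRingEnd ℂ) (dft N n m) * dft N n m' * c m' := by
    intro n
    rw [Matrix.mulVec, dotProduct, Finset.mul_sum]
    exact Finset.sum_congr rfl (fun m' _ => by ring)
  rw [Finset.sum_congr rfl (fun n _ => h1 n), Finset.sum_comm]
  have h2 : ∀ m' : Fin N, ∑ n : Fin N, (starRingEnd ℂ) (dft N n m) * dft N n m' * c m' =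
      (if m = m' then 1 else 0) * c m' := by
    intro m'
    rw [← Finset.sum_mul, dft_orth N hN m m']
  rw [Finset.sum_congr rfl (fun m' _ => h2 m')]
  simp

/-- Discrete uncertainty principle for the DFT : `‖c‖₀ ⬝ ‖Fc‖₀ ≥ N`. -/
lemma uncertainty (N : ℕ) (hN : 0 < N) (c : Fin N → ℂ) (hc : c ≠ 0) :
    N ≤ l0 c * l0 ((dft N).mulVec c) := by
  classical
  set u := (dft N).mulVec c with hu
  have hsN : (0:ℝ) < Real.sqrt N := Real.sqrt_pos.mpr (by exact_mod_cast hN)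
  have hsq : Real.sqrt N * Real.sqrt N = (N : ℝ) := Real.mul_self_sqrt (Nat.cast_nonneg N)
  obtain ⟨m₀, _, hmax⟩ := Finset.exists_max_image Finset.univ (fun m => ‖c m‖)
    ⟨⟨0, hN⟩, Finset.mem_univ _⟩
  have hc0 : 0 < ‖c m₀‖ := by
    obtain ⟨m, hm⟩ := Function.ne_iff.mp hc
    calc (0:ℝ) < ‖c m‖ := by simpa [norm_pos_iff] using hm
      _ ≤ ‖c m₀‖ := hmax m (Finset.mem_univ m)
  have hub : ∀ n, ‖u n‖ ≤ (l0 c : ℝ) * ‖c m₀‖ / Real.sqrt N := by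
    intro n
    have h1 : ‖u n‖ ≤ ∑ m, ‖dft N n m * c m‖ := by
      rw [hu, Matrix.mulVec, dotProduct]
      exact norm_sum_le _ _
    have h2 : ∀ m : Fin N, ‖dft N n m * c m‖ = ‖c m‖ / Real.sqrt N := by
      intro m
      rw [norm_mul, abs_dft N]
      ring
    rw [Finset.sum_congr rfl (fun m _ => h2 m), ← Finset.sum_div] at h1
    have h3 : ∑ m, ‖c m‖ ≤ (l0 c : ℝ) * ‖c m₀‖ :=
      sum_abs_le_l0_mul c _ (fun m => hmax m (Finset.mem_univ m))
    calc ‖u n‖ ≤ (∑ m, ‖c m‖) / Real.sqrt N := h1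
      _ ≤ (l0 c : ℝ) * ‖c m₀‖ / Real.sqrt N := by
          gcongr
  have hkey : ‖c m₀‖ ≤
      (l0 u : ℝ) * ((l0 c : ℝ) * ‖c m₀‖ / Real.sqrt N) / Real.sqrt N := by
    calc ‖c m₀‖
        = ‖∑ n : Fin N, (starRingEnd ℂ) (dft N n m₀) * u n‖ := by
          rw [← dft_inversion N hN c m₀]
      _ ≤ ∑ n : Fin N, ‖(starRingEnd ℂ) (dft N n m₀) * u n‖ :=
          norm_sum_le _ _
      _ = ∑ n : Fin N, ‖u n‖ / Real.sqrt N := by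
          refine Finset.sum_congr rfl (fun n _ => ?_)
          rw [norm_mul, Complex.norm_conj, abs_dft N]
          ring
      _ = (∑ n : Fin N, ‖u n‖) / Real.sqrt N := by rw [← Finset.sum_div]
      _ ≤ (l0 u : ℝ) * ((l0 c : ℝ) * ‖c m₀‖ / Real.sqrt N) / Real.sqrt N := by
          gcongr
          exact sum_abs_le_l0_mul u _ hub
  have hNR : (0:ℝ) < (N : ℝ) := by exact_mod_cast hN
  have hfinal : (N : ℝ) ≤ (l0 c : ℝ) * (l0 u : ℝ) := by
    have h2 : (l0 u : ℝ) * ((l0 c : ℝ) * ‖c m₀‖ / Real.sqrt N) / Real.sqrt N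
        = (l0 u : ℝ) * (l0 c : ℝ) * ‖c m₀‖ / (N : ℝ) := by
      rw [← hsq]
      field_simp
      rw [Real.sqrt_sq hsN.le]
    rw [h2, le_div_iff₀ hNR] at hkey
    nlinarith [hkey, hc0]
  exact_mod_cast hfinal

/-- The DFT of the comb with spikes at multiples of `L` is the comb at multiples of `M`. -/
lemma comb_dft (N L M : ℕ) (hN : N = L * M) (hL : 0 < L) (hM : 0 < M) (n : Fin N) :
    (dft N).mulVec (fun m : Fin N => if L ∣ (m : ℕ) then (1 : ℂ) else 0) n =
      if M ∣ (n : ℕ) then (M : ℂ) / (Real.sqrt N : ℂ) else 0 := by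
  classical
  have hN0 : 0 < N := hN ▸ Nat.mul_pos hL hM
  have hLC : (L : ℂ) ≠ 0 := Nat.cast_ne_zero.mpr hL.ne'
  have hMC : (M : ℂ) ≠ 0 := Nat.cast_ne_zero.mpr hM.ne'
  rw [Matrix.mulVec, dotProduct]
  have h1 : ∀ m : Fin N, dft N n m * (if L ∣ (m : ℕ) then (1 : ℂ) else 0) =
      if L ∣ (m : ℕ) then (fun k : ℕ =>
        Complex.exp (2 * Real.pi * Complex.I * (n : ℕ) * (k : ℕ) / N) / (Real.sqrt N : ℂ)) (m : ℕ)
      else 0 := by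
    intro m
    unfold dft
    split_ifs <;> ring
  rw [Finset.sum_congr rfl (fun m _ => h1 m), sum_fin_dvd N L M hN hL hM
    (fun k => Complex.exp (2 * Real.pi * Complex.I * (n : ℕ) * (k : ℕ) / N) / (Real.sqrt N : ℂ))]
  have h2 : ∀ j : ℕ, Complex.exp (2 * Real.pi * Complex.I * (n : ℕ) * ((L * j : ℕ) : ℂ) / N) =
      Complex.exp (2 * Real.pi * Complex.I * ((n : ℕ) : ℤ) * (j : ℕ) / M) := by
    intro j
    congr 1
    have hNC : (N : ℂ) ≠ 0 := Nat.cast_ne_zero.mpr hN0.ne'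
    have hNC' : (N : ℂ) = (L : ℂ) * M := by rw [hN]; push_cast; ring
    rw [div_eq_div_iff hNC hMC, hNC']
    push_cast
    ring
  simp only [h2]
  rw [← Finset.sum_div, exp_geom_sum M hM ((n : ℕ) : ℤ)]
  have h3 : ((M : ℤ) ∣ ((n : ℕ) : ℤ)) ↔ M ∣ (n : ℕ) := Int.natCast_dvd_natCast
  rw [if_congr h3 rfl rfl, ite_div, zero_div]

lemma l0_sub_le {N : ℕ} (u v : Fin N → ℂ) :
    l0 (fun k => u k - v k) ≤ l0 u + l0 v := by
  classical
  simp only [l0]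
  calc (Finset.univ.filter (fun k => u k - v k ≠ 0)).card
      ≤ ((Finset.univ.filter (fun k => u k ≠ 0)) ∪ (Finset.univ.filter (fun k => v k ≠ 0))).card := by
        apply Finset.card_le_card
        intro k hk
        simp only [Finset.mem_filter, Finset.mem_univ, true_and, Finset.mem_union] at hk ⊢
        by_contra h
        push_neg at h
        obtain ⟨h1, h2⟩ := h
        exact hk (by rw [h1, h2, sub_zero])
    _ ≤ _ := Finset.card_union_le _ _

lemma l0_sum_split {N : ℕ} (w : Fin N ⊕ Fin N → ℂ) :
    l0 w = l0 (fun k => w (Sum.inl k)) + l0 (fun k => w (Sum.inr k)) := by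
  classical
  simp only [l0, Finset.card_filter]
  rw [Fintype.sum_sum_type]

lemma sum_range_lt {β : Type*} [NonAssocSemiring β] (L j : ℕ) (hj : j ≤ L) (r : β) :
    ∑ i ∈ Finset.range L, (if i < j then r else 0) = (j : β) * r := by
  rw [← Finset.sum_filter]
  have h : (Finset.range L).filter (fun i => i < j) = Finset.range j := by
    ext i; simp only [Finset.mem_filter, Finset.mem_range]; omega
  rw [h, Finset.sum_const, Finset.card_range, nsmul_eq_mul]

lemma sum_range_ge {β : Type*} [NonAssocSemiring β] (L j : ℕ) (r : β) :
    ∑ i ∈ Finset.range L, (if j ≤ i then r else 0) = ((L - j : ℕ) : β) * r := by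
  rw [← Finset.sum_filter]
  have h : (Finset.range L).filter (fun i => j ≤ i) = Finset.Ico j L := by
    ext i; simp only [Finset.mem_filter, Finset.mem_range, Finset.mem_Ico]; omega
  rw [h, Finset.sum_const, Nat.card_Ico, nsmul_eq_mul]

lemma sq_ne (d K N : ℕ) (hd : 1 ≤ d) (hN : N = 2 ^ (2 * d - 1)) : K * K ≠ N := by
  intro h
  have hdvd : K ∣ 2 ^ (2 * d - 1) := by rw [← hN, ← h]; exact Dvd.intro K rfl
  obtain ⟨e, he, rfl⟩ := (Nat.dvd_prime_pow Nat.prime_two).mp hdvd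
  rw [hN, ← pow_add] at h
  have := Nat.pow_right_injective (le_refl 2) h
  omega

end Aux

open Complex Finset

set_option maxHeartbeats 1000000 in
/-- **`(P0)` and `(P1)` are not equivalent for `[F, I]` at sparsity `⌊√N⌋`.** For every
`d ≥ 4`, with `N = 2^(2d-1)` and `K = ⌊√N⌋`, there exist distinct `x, x̃ ∈ ℂ^(2N)` such that
`x` has at most `K` nonzero entries with `K < √N`, `[F, I] x = [F, I] x̃`, and
`‖x̃‖₁ < ‖x‖₁`; moreover `x` is the unique sparsest representation of `y = [F, I] x`
(any other representation has strictly more nonzero entries), yet `x` does not minimize the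
`ℓ₁` norm subject to the synthesis constraint. -/
theorem stmt15 (d : ℕ) (hd : 4 ≤ d) (N : ℕ) (hN : N = 2 ^ (2 * d - 1))
    (K : ℕ) (hK : K = Nat.sqrt N) :
    ∃ x xt : Fin N ⊕ Fin N → ℂ, x ≠ xt ∧
      l0 x ≤ K ∧ (K : ℝ) < Real.sqrt N ∧
      synth N x = synth N xt ∧
      (∑ i : Fin N ⊕ Fin N, ‖xt i‖) < ∑ i : Fin N ⊕ Fin N, ‖x i‖ ∧
      (∀ w : Fin N ⊕ Fin N → ℂ, synth N w = synth N x → w ≠ x → l0 x < l0 w) := by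
  classical
  set M : ℕ := 2 ^ (d - 1) with hMdef
  set L : ℕ := 2 ^ d with hLdef
  have hM8 : 8 ≤ M := by
    calc 8 = 2 ^ 3 := by norm_num
    _ ≤ 2 ^ (d - 1) := Nat.pow_le_pow_right (by norm_num) (by omega)
  have hMpos : 0 < M := by positivity
  have hLpos : 0 < L := by positivity
  have hML : M ≤ L := Nat.pow_le_pow_right (by norm_num) (by omega)
  have hLM : N = L * M := by
    rw [hN, hLdef, hMdef, ← pow_add]
    congr 1
    omega
  have hL2M : L = 2 * M := by
    rw [hLdef, hMdef]
    calc (2:ℕ) ^ d = 2 ^ ((d-1)+1) := by rw [Nat.sub_add_cancel (by omega)]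
    _ = 2 * 2 ^ (d-1) := by rw [pow_succ]; ring
  have hN2 : N = 2 * M ^ 2 := by rw [hLM, hL2M]; ring
  have hN0 : 0 < N := hLM ▸ Nat.mul_pos hLpos hMpos
  -- arithmetic facts on K
  have hKN : K * K ≤ N := hK ▸ Nat.sqrt_le N
  have hKK : K * K < N := lt_of_le_of_ne hKN (sq_ne d K N (by omega) hN)
  have hMK : M < K := by
    rw [hK]
    have : M + 1 ≤ Nat.sqrt N := Nat.le_sqrt.mpr (by nlinarith [hM8, hN2])
    omega
  have hK2M : K < 2 * M := by
    rw [hK]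
    exact Nat.sqrt_lt.mpr (by nlinarith [hMpos, hN2])
  set j : ℕ := K - M with hjdef
  have hjM : j < M := by omega
  have hjL : j ≤ L := by omega
  have hMjK : M + j = K := by omega
  have hMjN : M * j ≤ N := by nlinarith
  -- real facts
  have hNR : (0:ℝ) < (N:ℝ) := by exact_mod_cast hN0
  have hsN : (0:ℝ) < Real.sqrt N := Real.sqrt_pos.mpr hNR
  have hs2 : Real.sqrt N = (M:ℝ) * Real.sqrt 2 := by
    have h1 : (N:ℝ) = (M:ℝ)^2 * 2 := by rw [hN2]; push_cast; ring
    rw [h1, Real.sqrt_mul (sq_nonneg _), Real.sqrt_sq (by positivity)]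
  have hKR : (K:ℝ) < Real.sqrt N := by
    apply (Real.lt_sqrt (by positivity)).mpr
    have h : ((K*K : ℕ):ℝ) < (N:ℝ) := by exact_mod_cast hKK
    push_cast at h
    nlinarith [h]
  have hMR : (0:ℝ) < (M:ℝ) := by exact_mod_cast hMpos
  have key : 4*(M:ℝ) - 2*(K:ℝ) < Real.sqrt N := by
    rcases Nat.lt_or_ge d 5 with h5 | h5
    · have hd4 : d = 4 := by omega
      have hN128 : N = 128 := by rw [hN, hd4]; norm_num
      have hM8' : M = 8 := by rw [hMdef, hd4]; norm_num
      have hK11 : K = 11 := by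
        rw [hK, hN128]
        have h1 : 11 ≤ Nat.sqrt 128 := Nat.le_sqrt.mpr (by norm_num)
        have h2 : Nat.sqrt 128 < 12 := Nat.sqrt_lt.mpr (by norm_num)
        omega
      rw [hM8', hK11, hN128]
      have : (10:ℝ) < Real.sqrt 128 := by
        apply (Real.lt_sqrt (by norm_num)).mpr
        norm_num
      push_cast
      linarith
    · have hM16 : (16:ℝ) ≤ (M:ℝ) := by
        have : (16:ℕ) ≤ M := by
          calc (16:ℕ) = 2 ^ 4 := by norm_num
          _ ≤ 2 ^ (d-1) := Nat.pow_le_pow_right (by norm_num) (by omega)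
        exact_mod_cast this
      have hub : Real.sqrt N < (K:ℝ) + 1 := by
        apply (Real.sqrt_lt' (by positivity)).mpr
        have h1 : N < (K+1) * (K+1) := by
          rw [hK]; simpa using Nat.lt_succ_sqrt N
        have h2 : ((N:ℕ):ℝ) < (((K+1) * (K+1) : ℕ):ℝ) := by exact_mod_cast h1
        push_cast at h2
        nlinarith [h2]
      have hsqrt2 : (1.414:ℝ) ≤ Real.sqrt 2 := by
        nlinarith [Real.sq_sqrt (by norm_num : (0:ℝ) ≤ 2), Real.sqrt_nonneg 2]
      have hprod : 3*(M:ℝ) * 1.414 ≤ 3*(M:ℝ) * Real.sqrt 2 :=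
        mul_le_mul_of_nonneg_left hsqrt2 (by positivity)
      rw [hs2] at hub ⊢
      linarith [hub, hprod, hM16]
  -- the vectors
  set ca : ℂ := (M : ℂ) / (Real.sqrt N : ℂ) with hcadef
  have hca0 : ca ≠ 0 := by
    apply div_ne_zero
    · exact_mod_cast hMpos.ne'
    · exact_mod_cast hsN.ne'
  have hcab : ‖ca‖ = (M:ℝ) / Real.sqrt N := by
    rw [hcadef, norm_div, Complex.norm_natCast, Complex.norm_real,
      Real.norm_of_nonneg (Real.sqrt_nonneg _)]
  set x : Fin N ⊕ Fin N → ℂ := Sum.elim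
    (fun k : Fin N => if L ∣ (k:ℕ) then (-1:ℂ) else 0)
    (fun n : Fin N => if M ∣ (n:ℕ) ∧ (n:ℕ) < M*j then ca else 0) with hxdef
  set xt : Fin N ⊕ Fin N → ℂ := Sum.elim
    (fun _ : Fin N => (0:ℂ))
    (fun n : Fin N => if M ∣ (n:ℕ) ∧ M*j ≤ (n:ℕ) then -ca else 0) with hxtdef
  -- l0 of x
  have hl0inl : l0 (fun k => x (Sum.inl k)) = M := by
    simp only [hxdef, Sum.elim_inl, l0, Finset.card_filter]
    have h1 : ∀ k : Fin N, (if (if L ∣ (k:ℕ) then (-1:ℂ) else 0) ≠ 0 then 1 else 0)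
        = if L ∣ (k:ℕ) then (fun _ : ℕ => (1:ℕ)) (k:ℕ) else 0 := by
      intro k
      by_cases h : L ∣ (k:ℕ) <;> simp [h]
    rw [Finset.sum_congr rfl (fun k _ => h1 k),
      sum_fin_dvd N L M hLM hLpos hMpos (fun _ => (1:ℕ))]
    simp
  have hl0inr : l0 (fun k => x (Sum.inr k)) = j := by
    simp only [hxdef, Sum.elim_inr, l0, Finset.card_filter]
    have h1 : ∀ n : Fin N, (if (if M ∣ (n:ℕ) ∧ (n:ℕ) < M*j then ca else 0) ≠ 0 then 1 else 0)
        = if M ∣ (n:ℕ) then (fun k : ℕ => if k < M*j then (1:ℕ) else 0) (n:ℕ) else 0 := by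
      intro n
      by_cases h1 : M ∣ (n:ℕ) <;> by_cases h2 : (n:ℕ) < M*j <;> simp [h1, h2, hca0]
    rw [Finset.sum_congr rfl (fun n _ => h1 n),
      sum_fin_dvd N M L (by rw [hLM]; ring) hMpos hLpos (fun k => if k < M*j then (1:ℕ) else 0)]
    have h2 : ∀ i : ℕ, (if M * i < M * j then (1:ℕ) else 0) = if i < j then (1:ℕ) else 0 := by
      intro i
      rw [if_congr (Nat.mul_lt_mul_left hMpos) rfl rfl]
    rw [Finset.sum_congr rfl (fun i _ => h2 i), sum_range_lt L j hjL (1:ℕ)]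
    simp
  have hl0x : l0 x = K := by
    rw [l0_sum_split x, hl0inl, hl0inr, hMjK]
  -- synth equality
  have hxinl : (x ∘ Sum.inl) = -(fun m : Fin N => if L ∣ (m:ℕ) then (1:ℂ) else 0) := by
    funext k
    simp only [hxdef, Function.comp_apply, Sum.elim_inl, Pi.neg_apply]
    split_ifs <;> simp
  have hxtinl : (xt ∘ Sum.inl) = 0 := by
    funext k
    simp [hxtdef]
  have hsynth : synth N x = synth N xt := by
    funext n
    simp only [synth, Pi.add_apply, Function.comp_apply]
    rw [show (x ∘ Sum.inl) = -(fun m : Fin N => if L ∣ (m:ℕ) then (1:ℂ) else 0) from hxinl,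
      show (xt ∘ Sum.inl) = 0 from hxtinl]
    rw [Matrix.mulVec_neg, Matrix.mulVec_zero]
    simp only [Pi.neg_apply, Pi.zero_apply]
    rw [comb_dft N L M hLM hLpos hMpos n]
    simp only [hxdef, hxtdef, Sum.elim_inr, ← hcadef]
    by_cases h1 : M ∣ (n:ℕ)
    · by_cases h2 : (n:ℕ) < M*j
      · simp [h1, h2, not_le.mpr h2]
      · simp [h1, h2, not_lt.mp h2]
    · simp [h1]
  -- ℓ₁ norms
  have hl1x : ∑ i : Fin N ⊕ Fin N, ‖x i‖
      = (M:ℝ) + (j:ℝ) * ((M:ℝ) / Real.sqrt N) := by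
    rw [Fintype.sum_sum_type]
    have hinl : ∑ k : Fin N, ‖x (Sum.inl k)‖ = (M:ℝ) := by
      have h1 : ∀ k : Fin N, ‖x (Sum.inl k)‖
          = if L ∣ (k:ℕ) then (fun _ : ℕ => (1:ℝ)) (k:ℕ) else 0 := by
        intro k
        simp only [hxdef, Sum.elim_inl]
        split_ifs <;> simp
      rw [Finset.sum_congr rfl (fun k _ => h1 k),
        sum_fin_dvd N L M hLM hLpos hMpos (fun _ => (1:ℝ))]
      simp
    have hinr : ∑ k : Fin N, ‖x (Sum.inr k)‖ = (j:ℝ) * ((M:ℝ) / Real.sqrt N) := by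
      have h1 : ∀ n : Fin N, ‖x (Sum.inr n)‖
          = if M ∣ (n:ℕ) then (fun k : ℕ => if k < M*j then (M:ℝ)/Real.sqrt N else 0) (n:ℕ) else 0 := by
        intro n
        simp only [hxdef, Sum.elim_inr]
        by_cases h1 : M ∣ (n:ℕ) <;> by_cases h2 : (n:ℕ) < M*j <;> simp [h1, h2, hcab]
      rw [Finset.sum_congr rfl (fun n _ => h1 n),
        sum_fin_dvd N M L (by rw [hLM]; ring) hMpos hLpos
          (fun k : ℕ => if k < M*j then (M:ℝ)/Real.sqrt N else 0)]
      have h2 : ∀ i : ℕ, (if M * i < M * j then (M:ℝ)/Real.sqrt N else 0)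
          = if i < j then (M:ℝ)/Real.sqrt N else 0 := by
        intro i
        rw [if_congr (Nat.mul_lt_mul_left hMpos) rfl rfl]
      rw [Finset.sum_congr rfl (fun i _ => h2 i), sum_range_lt L j hjL]
    rw [hinl, hinr]
  have hl1xt : ∑ i : Fin N ⊕ Fin N, ‖xt i‖
      = ((L - j : ℕ):ℝ) * ((M:ℝ) / Real.sqrt N) := by
    rw [Fintype.sum_sum_type]
    have hinl : ∑ k : Fin N, ‖xt (Sum.inl k)‖ = 0 := by
      simp [hxtdef]
    have hinr : ∑ k : Fin N, ‖xt (Sum.inr k)‖ = ((L - j : ℕ):ℝ) * ((M:ℝ) / Real.sqrt N) := by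
      have h1 : ∀ n : Fin N, ‖xt (Sum.inr n)‖
          = if M ∣ (n:ℕ) then (fun k : ℕ => if M*j ≤ k then (M:ℝ)/Real.sqrt N else 0) (n:ℕ) else 0 := by
        intro n
        simp only [hxtdef, Sum.elim_inr]
        by_cases h1 : M ∣ (n:ℕ) <;> by_cases h2 : M*j ≤ (n:ℕ) <;> simp [h1, h2, hcab]
      rw [Finset.sum_congr rfl (fun n _ => h1 n),
        sum_fin_dvd N M L (by rw [hLM]; ring) hMpos hLpos
          (fun k : ℕ => if M*j ≤ k then (M:ℝ)/Real.sqrt N else 0)]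
      have h2 : ∀ i : ℕ, (if M * j ≤ M * i then (M:ℝ)/Real.sqrt N else 0)
          = if j ≤ i then (M:ℝ)/Real.sqrt N else 0 := by
        intro i
        rw [if_congr (by constructor <;> intro h <;> [exact Nat.le_of_mul_le_mul_left h hMpos; exact Nat.mul_le_mul_left M h] : M * j ≤ M * i ↔ j ≤ i) rfl rfl]
      rw [Finset.sum_congr rfl (fun i _ => h2 i), sum_range_ge L j]
    rw [hinl, hinr, zero_add]
  refine ⟨x, xt, ?_, ?_, hKR, hsynth, ?_, ?_⟩
  · -- x ≠ xt
    intro h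
    have h0 := congrFun h (Sum.inl ⟨0, hN0⟩)
    simp only [hxdef, hxtdef, Sum.elim_inl] at h0
    rw [if_pos (by simp : L ∣ ((⟨0, hN0⟩ : Fin N):ℕ))] at h0
    exact (by norm_num : (-1:ℂ) ≠ 0) h0
  · exact le_of_eq hl0x
  · -- ℓ₁ inequality
    rw [hl1x, hl1xt]
    set t : ℝ := (M:ℝ) / Real.sqrt N with htdef
    have ht0 : 0 < t := by positivity
    have htN : t * Real.sqrt N = (M:ℝ) := div_mul_cancel₀ _ hsN.ne'
    have hcast : ((L - j : ℕ):ℝ) = (L:ℝ) - (j:ℝ) := by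
      have := Nat.cast_sub hjL (R := ℝ)
      exact this
    have hLr : (L:ℝ) = 2*(M:ℝ) := by exact_mod_cast hL2M
    have hjr : (j:ℝ) = (K:ℝ) - (M:ℝ) := by
      have : ((j:ℕ):ℝ) = ((K - M : ℕ):ℝ) := by rw [hjdef]
      rw [this, Nat.cast_sub (by omega)]
    have hmul : t * (4*(M:ℝ) - 2*(K:ℝ)) < t * Real.sqrt N :=
      mul_lt_mul_of_pos_left key ht0
    rw [htN] at hmul
    rw [hcast, hLr, hjr]
    nlinarith [hmul, ht0]
  · -- uniqueness
    intro w hsw hwx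
    set c : Fin N → ℂ := fun k => w (Sum.inl k) - x (Sum.inl k) with hcdef
    have hc : c ≠ 0 := by
      intro hc0
      apply hwx
      have hinleq : ∀ k, w (Sum.inl k) = x (Sum.inl k) := by
        intro k
        have := congrFun hc0 k
        simp only [hcdef, Pi.zero_apply] at this
        linear_combination this
      have hinl : (w ∘ Sum.inl) = (x ∘ Sum.inl) := funext hinleq
      funext i
      cases i with
      | inl k => exact hinleq k
      | inr k =>
        have h := congrFun hsw k
        simp only [synth, Pi.add_apply, Function.comp_apply, hinl] at h
        linear_combination h
    have hFc : (dft N).mulVec c = fun nn => x (Sum.inr nn) - w (Sum.inr nn) := by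
      have hceq : c = (w ∘ Sum.inl) - (x ∘ Sum.inl) := rfl
      rw [hceq, Matrix.mulVec_sub]
      funext nn
      have h := congrFun hsw nn
      simp only [synth, Pi.add_apply, Function.comp_apply, Pi.sub_apply] at h ⊢
      linear_combination h
    have hpq := uncertainty N hN0 c hc
    have hp : l0 c ≤ l0 (fun k => w (Sum.inl k)) + l0 (fun k => x (Sum.inl k)) :=
      l0_sub_le _ _
    have hq : l0 ((dft N).mulVec c) ≤ l0 (fun k => x (Sum.inr k)) + l0 (fun k => w (Sum.inr k)) := by
      rw [hFc]
      exact l0_sub_le _ _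
    have hsplitw := l0_sum_split w
    have hgt : 2*K < l0 c + l0 ((dft N).mulVec c) := by
      set p := l0 c
      set q := l0 ((dft N).mulVec c)
      have h1 : (N:ℤ) ≤ (p:ℤ) * q := by exact_mod_cast hpq
      have h2 : (K:ℤ) * K < (N:ℤ) := by exact_mod_cast hKK
      have : (2*K:ℤ) < (p:ℤ) + q := by nlinarith [sq_nonneg ((p:ℤ) - q)]
      exact_mod_cast this
    rw [hl0x]
    omega
end

section
/- For every d ≥ 2, with N = 2^{2d−1}, D = [F, I] the N × 2N union of the unitary DFT matrix and the identity, and K = 3·2^{d−2}, there exist two distinct vectors x_0, x_1 ∈ ℂ^{2N}, each with at most K nonzero entries, such that D x_0 = D x_1. Moreover, √N < K < √(2N); that is, the common sparsity level exceeds the uniqueness bound √N for (P0) but remains below the ProSparse bound √(2N). -/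
open Finset

lemma card_mult (N q t : ℕ) (hq : 0 < q) (h : N = q * t) :
    ((Finset.univ : Finset (Fin N)).filter fun m : Fin N => q ∣ (m : ℕ)).card = t := by
  subst h
  have key : ((Finset.univ : Finset (Fin (q*t))).filter fun m : Fin (q*t) => q ∣ (m : ℕ)).card
      = (Finset.univ : Finset (Fin t)).card := by
    refine Finset.card_bij'
      (fun m _ => (⟨(m : ℕ) / q, Nat.div_lt_of_lt_mul m.2⟩ : Fin t))
      (fun k _ => (⟨q * (k : ℕ), by
        have := k.2
        calc q * (k:ℕ) < q * t := by exact (Nat.mul_lt_mul_left hq).mpr k.2⟩ : Fin (q*t)))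
      ?_ ?_ ?_ ?_
    · intro a ha; exact Finset.mem_univ _
    · intro b hb
      simp only [Finset.mem_filter, Finset.mem_univ, true_and]
      exact Dvd.intro _ rfl
    · intro a ha
      have hd : q ∣ (a : ℕ) := (Finset.mem_filter.mp ha).2
      simp [Fin.ext_iff, Nat.mul_div_cancel' hd]
    · intro b hb
      simp [Fin.ext_iff, Nat.mul_div_cancel_left _ hq]
  simpa using key

lemma l0_sum_le {N : ℕ} (x : Fin N ⊕ Fin N → ℂ) (s t : Finset (Fin N))
    (h1 : ∀ i, x (Sum.inl i) ≠ 0 → i ∈ s) (h2 : ∀ i, x (Sum.inr i) ≠ 0 → i ∈ t) :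
    l0 x ≤ s.card + t.card := by
  classical
  rw [l0, ← Finset.card_disjSum]
  apply le_trans (Finset.card_le_card ?_) (le_of_eq (by congr 1))
  · intro i hi
    have hx : x i ≠ 0 := (Finset.mem_filter.mp hi).2
    cases i with
    | inl a => exact Finset.inl_mem_disjSum.mpr (h1 a hx)
    | inr b => exact Finset.inr_mem_disjSum.mpr (h2 b hx)

lemma dft_comb (N e : ℕ) (he : 0 < e) (hN : N = 8 * e ^ 2) (m : Fin N) :
    (dft N).mulVec (fun j : Fin N => if 4 * e ∣ (j : ℕ) then (1 : ℂ) else 0) m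
      = if 2 * e ∣ (m : ℕ) then (2 * e : ℂ) / (Real.sqrt N : ℂ) else 0 := by
  have he2 : ((2 * e : ℕ) : ℂ) ≠ 0 := Nat.cast_ne_zero.mpr (by omega)
  have hNC : (N : ℂ) = 8 * (e : ℂ) ^ 2 := by rw [hN]; push_cast; ring
  have heC : (e : ℂ) ≠ 0 := Nat.cast_ne_zero.mpr (by omega)
  have hNfac : N = (4 * e) * (2 * e) := by rw [hN]; ring
  have h4e : 0 < 4 * e := by omega
  have h2e : 0 < 2 * e := by omega
  have hjlt : ∀ k : ℕ, 4 * e * (k % (2 * e)) < N := fun k => by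
    rw [hNfac]; exact (Nat.mul_lt_mul_left h4e).mpr (Nat.mod_lt _ h2e)
  set z : ℂ := Complex.exp (2 * Real.pi * Complex.I * (m : ℕ) / (2 * e)) with hz
  -- the sum equals (Σ_{k < 2e} z^k)/√N
  have hsum : (dft N).mulVec (fun j : Fin N => if 4 * e ∣ (j : ℕ) then (1 : ℂ) else 0) m
      = (∑ k ∈ Finset.range (2 * e), z ^ k) / (Real.sqrt N : ℂ) := by
    rw [Matrix.mulVec, dotProduct]
    simp only [dft, mul_ite, mul_one, mul_zero]
    rw [← Finset.sum_filter]
    rw [Finset.sum_nbij' (i := fun j : Fin N => (j : ℕ) / (4 * e))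
      (j := fun k : ℕ => (⟨4 * e * (k % (2 * e)), hjlt k⟩ : Fin N))
      (hi := ?_) (hj := ?_) (left_neg := ?_) (right_neg := ?_) (h := ?_)]
    · rw [Finset.sum_div]
    · intro a ha
      have h2 : (a : ℕ) < N := a.2
      rw [Finset.mem_range]
      exact Nat.div_lt_of_lt_mul (by omega)
    · intro b hb
      simp only [Finset.mem_filter, Finset.mem_univ, true_and]
      exact Dvd.intro _ rfl
    · intro a ha
      have hd : (4 * e) ∣ (a : ℕ) := (Finset.mem_filter.mp ha).2
      have h2 : (a : ℕ) < N := a.2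
      have hlt : (a : ℕ) / (4 * e) < 2 * e := Nat.div_lt_of_lt_mul (by omega)
      simp only [Fin.ext_iff]
      rw [Nat.mod_eq_of_lt hlt, Nat.mul_div_cancel' hd]
    · intro b hb
      have hb' : b < 2 * e := Finset.mem_range.mp hb
      simp only
      rw [Nat.mod_eq_of_lt hb', Nat.mul_div_cancel_left _ (by omega)]
    · intro a ha
      have hd : (4 * e) ∣ (a : ℕ) := (Finset.mem_filter.mp ha).2
      obtain ⟨c, hc⟩ := hd
      have hcd : (a : ℕ) / (4 * e) = c := by rw [hc, Nat.mul_div_cancel_left _ h4e]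
      show Complex.exp (2 * Real.pi * Complex.I * (m : ℕ) * (a : ℕ) / N) / (Real.sqrt N : ℂ)
        = z ^ ((a : ℕ) / (4 * e)) / (Real.sqrt N : ℂ)
      rw [hcd, hz, ← Complex.exp_nat_mul]
      rw [hc, hNC]
      push_cast
      congr 1
      congr 1
      field_simp
      ring
  rw [hsum]
  have hz2e : z ^ (2 * e) = 1 := by
    rw [hz, ← Complex.exp_nat_mul]
    have : ((2 * e : ℕ) : ℂ) * (2 * Real.pi * Complex.I * (m : ℕ) / (2 * e)) =
        ((m : ℕ) : ℂ) * (2 * Real.pi * Complex.I) := by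
      push_cast
      field_simp
    rw [this]
    exact Complex.exp_nat_mul_two_pi_mul_I (m : ℕ)
  by_cases hdvd : 2 * e ∣ (m : ℕ)
  · rw [if_pos hdvd]
    obtain ⟨c, hc⟩ := hdvd
    have hz1 : z = 1 := by
      rw [hz, hc]
      have : 2 * Real.pi * Complex.I * ((2 * e * c : ℕ) : ℂ) / (2 * e) =
          ((c : ℕ) : ℂ) * (2 * Real.pi * Complex.I) := by
        push_cast
        field_simp
      rw [this]
      exact Complex.exp_nat_mul_two_pi_mul_I c
    rw [hz1]
    simp
  · rw [if_neg hdvd]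
    have hzne : z ≠ 1 := by
      intro hz1
      rw [hz, Complex.exp_eq_one_iff] at hz1
      obtain ⟨n, hn⟩ := hz1
      have hpi : (2 * Real.pi * Complex.I : ℂ) ≠ 0 := by
        simp [Real.pi_ne_zero, Complex.I_ne_zero]
      field_simp at hn
      have h3 : (2 * Real.pi * Complex.I) * ((m : ℕ) : ℂ)
          = (2 * Real.pi * Complex.I) * ((n : ℂ) * (2 * e)) := by linear_combination (2 * Real.pi * Complex.I) * hn
      have hmn : ((m : ℕ) : ℂ) = (n : ℂ) * (2 * e) := mul_left_cancel₀ hpi h3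
      have hint : ((m : ℕ) : ℤ) = n * (2 * e) := by exact_mod_cast hmn
      exact hdvd (Int.natCast_dvd_natCast.mp ⟨n, by push_cast; linear_combination hint⟩)
    rw [geom_sum_eq hzne, hz2e, sub_self, zero_div, zero_div]

/-- **Two distinct `K`-sparse representations beyond the `(P0)` uniqueness bound.** For every
`d ≥ 2`, with `N = 2^(2d-1)` and `K = 3 ⬝ 2^(d-2)`, there exist two distinct vectors
`x₀, x₁ ∈ ℂ^(2N)`, each with at most `K` nonzero entries, such that
`[F, I] x₀ = [F, I] x₁`; moreover `√N < K < √(2N)`. -/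
theorem stmt16 (d : ℕ) (hd : 2 ≤ d) (N : ℕ) (hN : N = 2 ^ (2 * d - 1))
    (K : ℕ) (hK : K = 3 * 2 ^ (d - 2)) :
    ∃ x0 x1 : Fin N ⊕ Fin N → ℂ, x0 ≠ x1 ∧
      l0 x0 ≤ K ∧ l0 x1 ≤ K ∧
      synth N x0 = synth N x1 ∧
      Real.sqrt N < (K : ℝ) ∧ (K : ℝ) < Real.sqrt (2 * N) := by
  classical
  set e : ℕ := 2 ^ (d - 2) with hedef
  have he : 0 < e := Nat.pow_pos (by norm_num)
  have hN8 : N = 8 * e ^ 2 := by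
    rw [hN, hedef, ← pow_mul]
    rw [show (8 : ℕ) = 2 ^ 3 by norm_num, ← pow_add]
    congr 1
    omega
  have hK3 : K = 3 * e := hK
  have hN0 : 0 < N := by rw [hN8]; positivity
  have hv0 : ((2 * e : ℕ) : ℂ) / (Real.sqrt N : ℂ) ≠ 0 := by
    apply div_ne_zero
    · exact Nat.cast_ne_zero.mpr (by omega)
    · simp only [ne_eq, Complex.ofReal_eq_zero]
      exact Real.sqrt_ne_zero'.mpr (by exact_mod_cast hN0)
  set v : ℂ := ((2 * e : ℕ) : ℂ) / (Real.sqrt N : ℂ) with hvdef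
  refine ⟨Sum.elim (fun j => if 4 * e ∣ (j : ℕ) then (1 : ℂ) else 0)
      (fun m => if 8 * e ∣ (m : ℕ) then -v else 0),
    Sum.elim (fun _ => 0)
      (fun m => if 2 * e ∣ (m : ℕ) ∧ ¬ 8 * e ∣ (m : ℕ) then v else 0),
    ?_, ?_, ?_, ?_, ?_, ?_⟩
  · -- distinct
    intro h
    have := congrFun h (Sum.inl ⟨0, hN0⟩)
    simp at this
  · -- l0 x0 ≤ K
    refine le_trans (l0_sum_le _ (Finset.univ.filter fun j : Fin N => 4 * e ∣ (j : ℕ))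
      (Finset.univ.filter fun m : Fin N => 8 * e ∣ (m : ℕ)) ?_ ?_) ?_
    · intro i hi
      simp only [Sum.elim_inl] at hi
      by_contra hmem
      simp only [Finset.mem_filter, Finset.mem_univ, true_and] at hmem
      exact hi (if_neg hmem)
    · intro i hi
      simp only [Sum.elim_inr] at hi
      by_contra hmem
      simp only [Finset.mem_filter, Finset.mem_univ, true_and] at hmem
      exact hi (if_neg hmem)
    · rw [card_mult N (4*e) (2*e) (by omega) (by rw [hN8]; ring),
        card_mult N (8*e) e (by omega) (by rw [hN8]; ring), hK3]
      omega
  · -- l0 x1 ≤ K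
    refine le_trans (l0_sum_le _ ∅
      ((Finset.univ.filter fun m : Fin N => 2 * e ∣ (m : ℕ)) \
       (Finset.univ.filter fun m : Fin N => 8 * e ∣ (m : ℕ))) ?_ ?_) ?_
    · intro i hi; simp at hi
    · intro i hi
      simp only [Sum.elim_inr] at hi
      by_contra hmem
      simp only [Finset.mem_sdiff, Finset.mem_filter, Finset.mem_univ, true_and,
        not_and, not_not] at hmem
      refine hi (if_neg ?_)
      rintro ⟨hm2, hm8⟩
      exact hm8 (hmem hm2)
    · rw [Finset.card_empty, Finset.card_sdiff_of_subset (by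
        intro x hx
        simp only [Finset.mem_filter, Finset.mem_univ, true_and] at hx ⊢
        exact dvd_trans ⟨4, by ring⟩ hx)]
      rw [card_mult N (2*e) (4*e) (by omega) (by rw [hN8]; ring),
        card_mult N (8*e) e (by omega) (by rw [hN8]; ring), hK3]
      omega
  · -- synthesis equality
    funext m
    simp only [synth, Pi.add_apply]
    have hF : ((Sum.elim (fun j : Fin N => if 4 * e ∣ (j : ℕ) then (1 : ℂ) else 0)
        (fun m : Fin N => if 8 * e ∣ (m : ℕ) then -v else 0)) ∘ Sum.inl)
        = (fun j : Fin N => if 4 * e ∣ (j : ℕ) then (1 : ℂ) else 0) := rfl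
    have hF2 : ((Sum.elim (fun _ : Fin N => (0 : ℂ))
        (fun m : Fin N => if 2 * e ∣ (m : ℕ) ∧ ¬ 8 * e ∣ (m : ℕ) then v else 0)) ∘ Sum.inl)
        = (0 : Fin N → ℂ) := rfl
    rw [hF, hF2, Matrix.mulVec_zero, dft_comb N e he hN8 m]
    simp only [Function.comp_apply, Sum.elim_inr, Pi.zero_apply, zero_add]
    by_cases h8 : 8 * e ∣ (m : ℕ)
    · have h2 : 2 * e ∣ (m : ℕ) := dvd_trans ⟨4, by ring⟩ h8
      rw [if_pos h2, if_pos h8, if_neg (by rintro ⟨_, hc⟩; exact hc h8)]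
      rw [hvdef]; push_cast; ring
    · by_cases h2 : 2 * e ∣ (m : ℕ)
      · rw [if_pos h2, if_neg h8, if_pos ⟨h2, h8⟩, hvdef]; push_cast; ring
      · rw [if_neg h2, if_neg h8, if_neg (by rintro ⟨hc, _⟩; exact h2 hc)]; ring
  · -- sqrt N < K
    rw [Real.sqrt_lt' (by rw [hK3]; positivity)]
    rw [hK3, hN8]
    push_cast
    have heR : (1 : ℝ) ≤ (e : ℝ) := by exact_mod_cast he
    nlinarith [heR]
  · -- K < sqrt (2 N)
    rw [Real.lt_sqrt (by positivity)]
    rw [hK3, hN8]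
    push_cast
    have heR : (1 : ℝ) ≤ (e : ℝ) := by exact_mod_cast he
    nlinarith [heR]
end
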